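/- arXiv:0910.4088 — 5 statements merged into one kernel-verified Lean document; each statement's English description precedes it below -/
import Mathlib

section
/- Let {η_t} be an irreducible positive recurrent continuous-time Markov chain on a countable set E, reversible with respect to its invariant probability μ, with holding rates λ ∈ L¹(μ). Let F = A ∪ B be a disjoint union and let r_F(A,B) = μ(A)⁻¹ Σ_{η∈A} λ(η)μ(η) P_η[T_B⁺ < T_{F∖B}⁺] be the mean jump rate of the trace process on F from A to B. Then μ(A) r_F(A,B) = Cap(A,B). -/
open MeasureTheory
open scoped ENNReal

noncomputable def retT {E : Type*} (A : Set E) (ω : ℕ → E) : ℕ∞ :=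
  ⨅ (n : ℕ) (_ : 0 < n ∧ ω n ∈ A), (n : ℕ∞)

noncomputable def hitT {E : Type*} (A : Set E) (ω : ℕ → E) : ℕ∞ :=
  ⨅ (n : ℕ) (_ : ω n ∈ A), (n : ℕ∞)

lemma infE_le {P : ℕ → Prop} {n : ℕ} (h : P n) :
    (⨅ (m : ℕ) (_ : P m), (m : ℕ∞)) ≤ n := iInf₂_le n h

lemma lt_infE {P : ℕ → Prop} {n : ℕ} (h : ∀ m ≤ n, ¬ P m) :
    (n : ℕ∞) < ⨅ (m : ℕ) (_ : P m), (m : ℕ∞) := by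
  have h2 : ((n + 1 : ℕ) : ℕ∞) ≤ ⨅ (m : ℕ) (_ : P m), (m : ℕ∞) := by
    refine le_iInf₂ fun m hm => ?_
    have : n < m := lt_of_not_ge fun hle => h m hle hm
    exact_mod_cast this
  exact lt_of_lt_of_le (by exact_mod_cast Nat.lt_succ_self n) h2

lemma infE_lt_infE_iff {P Q : ℕ → Prop} :
    (⨅ (m : ℕ) (_ : P m), (m : ℕ∞)) < (⨅ (m : ℕ) (_ : Q m), (m : ℕ∞))
      ↔ ∃ n, P n ∧ ∀ m ≤ n, ¬ Q m := by
  classical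
  constructor
  · intro hlt
    have hP : ∃ n, P n := by
      by_contra h
      push_neg at h
      simp [h] at hlt
    refine ⟨Nat.find hP, Nat.find_spec hP, fun m hm hQ => ?_⟩
    have h1 : (⨅ (k : ℕ) (_ : Q k), (k : ℕ∞)) ≤ m := infE_le hQ
    have h2 : ((Nat.find hP : ℕ) : ℕ∞) ≤ ⨅ (k : ℕ) (_ : P k), (k : ℕ∞) :=
      le_iInf₂ fun k hk => by exact_mod_cast Nat.find_min' hP hk
    have : ((Nat.find hP : ℕ) : ℕ∞) < (m : ℕ∞) := lt_of_le_of_lt h2 (lt_of_lt_of_le hlt h1)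
    have : Nat.find hP < m := by exact_mod_cast this
    omega
  · rintro ⟨n, hPn, hQ⟩
    exact lt_of_le_of_lt (infE_le hPn) (lt_infE hQ)

lemma hitT_lt_hitT_iff {E : Type*} {S T : Set E} {ω : ℕ → E} :
    hitT S ω < hitT T ω ↔ ∃ n, ω n ∈ S ∧ ∀ m ≤ n, ω m ∉ T := by
  unfold hitT; exact infE_lt_infE_iff

lemma retT_lt_retT_iff {E : Type*} {S T : Set E} {ω : ℕ → E} :
    retT S ω < retT T ω
      ↔ hitT S (fun n => ω (n + 1)) < hitT T (fun n => ω (n + 1)) := by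
  unfold retT hitT
  rw [infE_lt_infE_iff, infE_lt_infE_iff]
  constructor
  · rintro ⟨n, ⟨hn, hB⟩, hA⟩
    obtain ⟨k, rfl⟩ := Nat.exists_eq_succ_of_ne_zero (Nat.pos_iff_ne_zero.mp hn)
    exact ⟨k, hB, fun j hj hmem => hA (j + 1) (by omega) ⟨Nat.succ_pos j, hmem⟩⟩
  · rintro ⟨k, hB, hA⟩
    refine ⟨k + 1, ⟨Nat.succ_pos k, hB⟩, fun m hm ⟨hm0, hmA⟩ => ?_⟩
    obtain ⟨j, rfl⟩ := Nat.exists_eq_succ_of_ne_zero (Nat.pos_iff_ne_zero.mp hm0)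
    exact hA j (by omega) hmA
lemma summable_of_bound {ι : Type*} {c f : ι → ℝ} (hc : Summable c) (K : ℝ)
    (h : ∀ q, |f q| ≤ K * c q) : Summable f :=
  Summable.of_abs (Summable.of_nonneg_of_le (fun q => abs_nonneg _) h (hc.mul_left K))

section cross

variable {E : Type*} (c : E → E → ℝ)

lemma key_summable (hc0 : ∀ a b, 0 ≤ c a b)
    (hcs : Summable fun q : E × E => c q.1 q.2)
    (w : E × E → ℝ) (K : ℝ) (hw : ∀ q, |w q| ≤ K) :
    Summable fun q : E × E => c q.1 q.2 * w q := by
  apply summable_of_bound hcs K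
  intro q
  rw [abs_mul, abs_of_nonneg (hc0 _ _), mul_comm (c q.1 q.2)]
  exact mul_le_mul_of_nonneg_right (hw q) (hc0 _ _)

lemma slice_summable (hc0 : ∀ a b, 0 ≤ c a b)
    (hcs : Summable fun q : E × E => c q.1 q.2) (a : E) :
    Summable fun b => c a b := by
  have h0 : 0 ≤ fun q : E × E => c q.1 q.2 := fun q => hc0 _ _
  exact ((summable_prod_of_nonneg h0).mp hcs).1 a

lemma dirichlet_cross (hsym : ∀ a b, c a b = c b a) (hc0 : ∀ a b, 0 ≤ c a b)
    (hcs : Summable fun q : E × E => c q.1 q.2)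
    (v d : E → ℝ) (hv : ∀ a, |v a| ≤ 1) (hd : ∀ a, |d a| ≤ 2) :
    ∑' q : E × E, c q.1 q.2 * (v q.2 - v q.1) * (d q.2 - d q.1)
      = 2 * ∑' a, d a * ∑' b, c a b * (v a - v b) := by
  have hvsub : ∀ a b : E, |v a - v b| ≤ 2 := by
    intro a b
    have h1 := abs_le.mp (hv a)
    have h2 := abs_le.mp (hv b)
    rw [abs_le]; constructor <;> nlinarith [h1.1, h1.2, h2.1, h2.2]
  have hdsub : ∀ a b : E, |d a - d b| ≤ 4 := by
    intro a b
    have h1 := abs_le.mp (hd a)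
    have h2 := abs_le.mp (hd b)
    rw [abs_le]; constructor <;> nlinarith [h1.1, h1.2, h2.1, h2.2]
  have hmul : ∀ (x y : ℝ) (Kx Ky : ℝ), |x| ≤ Kx → |y| ≤ Ky → |x * y| ≤ Kx * Ky := by
    intro x y Kx Ky hx hy
    rw [abs_mul]
    exact mul_le_mul hx hy (abs_nonneg _) ((abs_nonneg x).trans hx)
  set F : E × E → ℝ := fun q => c q.1 q.2 * ((v q.2 - v q.1) * (d q.2 - d q.1)) with hF
  set G1 : E × E → ℝ := fun q => c q.1 q.2 * ((v q.2 - v q.1) * d q.2) with hG1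
  set G2 : E × E → ℝ := fun q => c q.1 q.2 * ((v q.2 - v q.1) * d q.1) with hG2
  set H : E × E → ℝ := fun q => c q.1 q.2 * ((v q.1 - v q.2) * d q.1) with hH
  have sF : Summable F :=
    key_summable c hc0 hcs _ (2*4) fun q => (hmul _ _ 2 4 (hvsub _ _) (hdsub _ _))
  have sG1 : Summable G1 :=
    key_summable c hc0 hcs _ (2*2) fun q => (hmul _ _ 2 2 (hvsub _ _) (hd _))
  have sG2 : Summable G2 :=
    key_summable c hc0 hcs _ (2*2) fun q => (hmul _ _ 2 2 (hvsub _ _) (hd _))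
  have sH : Summable H :=
    key_summable c hc0 hcs _ (2*2) fun q => (hmul _ _ 2 2 (hvsub _ _) (hd _))
  have sHslice : ∀ a, Summable fun b => H (a, b) := by
    intro a
    apply summable_of_bound (slice_summable c hc0 hcs a) (2*2)
    intro b
    rw [hH]
    simp only []
    rw [abs_mul, abs_of_nonneg (hc0 a b), mul_comm (c a b)]
    exact mul_le_mul_of_nonneg_right (hmul _ _ 2 2 (hvsub _ _) (hd _)) (hc0 a b)
  have step0 : ∑' q : E × E, c q.1 q.2 * (v q.2 - v q.1) * (d q.2 - d q.1) = ∑' q, F q :=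
    tsum_congr fun q => by rw [hF]; ring
  have step1 : ∑' q, F q = ∑' q, G1 q - ∑' q, G2 q := by
    rw [← Summable.tsum_sub sG1 sG2]
    exact tsum_congr fun q => by simp only [hF, hG1, hG2]; ring
  have step2 : ∑' q, G1 q = ∑' q, H q := by
    rw [← (Equiv.prodComm E E).tsum_eq G1]
    refine tsum_congr fun q => ?_
    simp only [hG1, hH, Equiv.prodComm_apply, Prod.fst_swap, Prod.snd_swap]
    rw [hsym q.2 q.1]
  have step3 : ∑' q, H q - ∑' q, G2 q = 2 * ∑' q, H q := by
    rw [← Summable.tsum_sub sH sG2, ← tsum_mul_left]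
    exact tsum_congr fun q => by simp only [hH, hG2]; ring
  have step4 : ∑' q, H q = ∑' a, d a * ∑' b, c a b * (v a - v b) := by
    rw [Summable.tsum_prod' sH sHslice]
    refine tsum_congr fun a => ?_
    rw [← tsum_mul_left]
    exact tsum_congr fun b => by simp only [hH]; ring
  rw [step0, step1, step2, step3, step4]

lemma dirichlet_boundary (hsym : ∀ a b, c a b = c b a) (hc0 : ∀ a b, 0 ≤ c a b)
    (hcs : Summable fun q : E × E => c q.1 q.2)
    (A B : Set E) (hAB : Disjoint A B) (v : E → ℝ)
    (hv : ∀ a, |v a| ≤ 1) (hA : ∀ a ∈ A, v a = 1) (hB : ∀ a ∈ B, v a = 0)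
    (hharm : ∀ a, a ∉ A → a ∉ B → ∑' b, c a b * (v a - v b) = 0) :
    ∑' q : E × E, c q.1 q.2 * (v q.2 - v q.1) ^ 2
      = 2 * ∑' a, A.indicator (fun a => ∑' b, c a b * (1 - v b)) a := by
  have hd : ∀ a, |v a| ≤ 2 := fun a => (hv a).trans (by norm_num)
  have h1 : ∑' q : E × E, c q.1 q.2 * (v q.2 - v q.1) ^ 2
      = ∑' q : E × E, c q.1 q.2 * (v q.2 - v q.1) * (v q.2 - v q.1) :=
    tsum_congr fun q => by ring
  rw [h1, dirichlet_cross c hsym hc0 hcs v v hv hd]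
  congr 1
  refine tsum_congr fun a => ?_
  by_cases haA : a ∈ A
  · rw [Set.indicator_of_mem haA, hA a haA, one_mul]
  · by_cases haB : a ∈ B
    · rw [Set.indicator_of_notMem haA, hB a haB, zero_mul]
    · rw [Set.indicator_of_notMem haA, hharm a haA haB, mul_zero]

lemma dirichlet_min (hsym : ∀ a b, c a b = c b a) (hc0 : ∀ a b, 0 ≤ c a b)
    (hcs : Summable fun q : E × E => c q.1 q.2)
    (A B : Set E) (v w : E → ℝ)
    (hv : ∀ a, |v a| ≤ 1) (hw : ∀ a, |w a| ≤ 1)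
    (hvA : ∀ a ∈ A, v a = 1) (hvB : ∀ a ∈ B, v a = 0)
    (hwA : ∀ a ∈ A, w a = 1) (hwB : ∀ a ∈ B, w a = 0)
    (hharm : ∀ a, a ∉ A → a ∉ B → ∑' b, c a b * (v a - v b) = 0) :
    ∑' q : E × E, c q.1 q.2 * (v q.2 - v q.1) ^ 2
      ≤ ∑' q : E × E, c q.1 q.2 * (w q.2 - w q.1) ^ 2 := by
  have hmul : ∀ (x y : ℝ) (Kx Ky : ℝ), |x| ≤ Kx → |y| ≤ Ky → |x * y| ≤ Kx * Ky := by
    intro x y Kx Ky hx hy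
    rw [abs_mul]
    exact mul_le_mul hx hy (abs_nonneg _) ((abs_nonneg x).trans hx)
  set d : E → ℝ := fun a => w a - v a with hdd
  have hd2 : ∀ a, |d a| ≤ 2 := by
    intro a
    have h1 := abs_le.mp (hv a)
    have h2 := abs_le.mp (hw a)
    simp only [hdd, abs_le]; constructor <;> nlinarith [h1.1, h1.2, h2.1, h2.2]
  have hsub : ∀ (u : E → ℝ) (K : ℝ), (∀ a, |u a| ≤ K) → ∀ a b : E, |u a - u b| ≤ 2 * K := by
    intro u K hu a b
    have h1 := abs_le.mp (hu a)
    have h2 := abs_le.mp (hu b)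
    rw [abs_le]; constructor <;> nlinarith [h1.1, h1.2, h2.1, h2.2]
  have bound_sq : ∀ (u : E → ℝ) (K : ℝ), (∀ a, |u a| ≤ K) →
      ∀ q : E × E, |(u q.2 - u q.1) ^ 2| ≤ (2 * K) ^ 2 := by
    intro u K hu q
    have h := abs_le.mp (hsub u K hu q.2 q.1)
    rw [abs_of_nonneg (sq_nonneg _)]
    nlinarith [h.1, h.2]
  have sv : Summable fun q : E × E => c q.1 q.2 * (v q.2 - v q.1) ^ 2 :=
    key_summable c hc0 hcs _ ((2 * 1) ^ 2) (bound_sq v 1 hv)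
  have sd : Summable fun q : E × E => c q.1 q.2 * (d q.2 - d q.1) ^ 2 :=
    key_summable c hc0 hcs _ ((2 * 2) ^ 2) (bound_sq d 2 hd2)
  have scross : Summable fun q : E × E => c q.1 q.2 * ((v q.2 - v q.1) * (d q.2 - d q.1)) := by
    refine key_summable c hc0 hcs _ 8 fun q => ?_
    have h1 := abs_le.mp (hsub v 1 hv q.2 q.1)
    have h2 := abs_le.mp (hsub d 2 hd2 q.2 q.1)
    rw [abs_le]
    constructor <;> nlinarith [h1.1, h1.2, h2.1, h2.2]
  have expand : ∑' q : E × E, c q.1 q.2 * (w q.2 - w q.1) ^ 2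
      = (∑' q : E × E, c q.1 q.2 * (v q.2 - v q.1) ^ 2)
        + (∑' q : E × E, c q.1 q.2 * (d q.2 - d q.1) ^ 2)
        + 2 * ∑' q : E × E, c q.1 q.2 * ((v q.2 - v q.1) * (d q.2 - d q.1)) := by
    rw [← tsum_mul_left, ← Summable.tsum_add sv sd, ← Summable.tsum_add (sv.add sd) (scross.mul_left 2)]
    exact tsum_congr fun q => by simp only [hdd]; ring
  have cross0 : ∑' q : E × E, c q.1 q.2 * ((v q.2 - v q.1) * (d q.2 - d q.1)) = 0 := by
    have h1 : ∑' q : E × E, c q.1 q.2 * ((v q.2 - v q.1) * (d q.2 - d q.1))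
        = ∑' q : E × E, c q.1 q.2 * (v q.2 - v q.1) * (d q.2 - d q.1) :=
      tsum_congr fun q => by ring
    rw [h1, dirichlet_cross c hsym hc0 hcs v d hv hd2]
    have h2 : ∀ a, d a * ∑' b, c a b * (v a - v b) = 0 := by
      intro a
      by_cases haA : a ∈ A
      · simp [hdd, hwA a haA, hvA a haA]
      · by_cases haB : a ∈ B
        · simp [hdd, hwB a haB, hvB a haB]
        · rw [hharm a haA haB, mul_zero]
    rw [tsum_congr h2, tsum_zero, mul_zero]
  rw [expand, cross0, mul_zero, add_zero]
  exact le_add_of_nonneg_right (tsum_nonneg fun q => mul_nonneg (hc0 _ _) (sq_nonneg _))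

end cross

lemma ofReal_double {E : Type*} (f : E → E → ℝ) (h0 : ∀ a b, 0 ≤ f a b)
    (hs : Summable fun q : E × E => f q.1 q.2)
    (hslice : ∀ a, Summable fun b => f a b) :
    ∑' (a) (b), ENNReal.ofReal (f a b) = ENNReal.ofReal (∑' q : E × E, f q.1 q.2) := by
  have hout : Summable fun a => ∑' b, f a b :=
    ((summable_prod_of_nonneg (fun q => h0 q.1 q.2)).mp hs).2
  calc ∑' (a) (b), ENNReal.ofReal (f a b)
      = ∑' a, ENNReal.ofReal (∑' b, f a b) :=
        tsum_congr fun a => (ENNReal.ofReal_tsum_of_nonneg (h0 a) (hslice a)).symm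
    _ = ENNReal.ofReal (∑' a, ∑' b, f a b) :=
        (ENNReal.ofReal_tsum_of_nonneg (fun a => tsum_nonneg (fun b => h0 a b)) hout).symm
    _ = ENNReal.ofReal (∑' q : E × E, f q.1 q.2) := by
        rw [Summable.tsum_prod' hs (fun a => hslice a)]

lemma diff_sq_bound (x y : ℝ) (hx : |x| ≤ 1) (hy : |y| ≤ 1) : |(x - y) ^ 2| ≤ 4 := by
  have h1 := abs_le.mp hx
  have h2 := abs_le.mp hy
  rw [abs_of_nonneg (sq_nonneg _)]
  nlinarith [h1.1, h1.2, h2.1, h2.2]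

lemma clamp_lip (x y : ℝ) : |max 0 (min 1 x) - max 0 (min 1 y)| ≤ |x - y| := by
  have h1 : |max 0 (min 1 x) - max 0 (min 1 y)| ≤ |min 1 x - min 1 y| := by
    rw [max_comm 0 (min 1 x), max_comm 0 (min 1 y)]
    exact abs_max_sub_max_le_abs _ _ _
  refine h1.trans ?_
  have h2 := abs_min_sub_min_le_max 1 x 1 y
  simpa using h2
/-- For an irreducible positive recurrent continuous-time Markov chain with rates `R`,
reversible with respect to its invariant probability `μ`, with holding rates
`lam ∈ L¹(μ)`, and for a disjoint union `F = A ∪ B`, the mean jump rate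
`r_F(A,B) = μ(A)⁻¹ ∑_{η∈A} lam(η) μ(η) P_η[T_B⁺ < T_{F∖B}⁺]` of the trace process on `F`
satisfies `μ(A) r_F(A,B) = Cap(A,B)`, where `Cap` is the Dirichlet variational capacity.
Here `ℙ` is the family of laws of the associated jump chain, with jump probabilities
`p(η,ξ) = R(η,ξ)/lam(η)`. -/
theorem stmt5 {E : Type*} [Countable E] [MeasurableSpace E] [MeasurableSingletonClass E]
    (R : E → E → ℝ) (lam μ : E → ℝ) (ℙ : E → Measure (ℕ → E)) (A B : Set E) (rF : ℝ)
    (hAB : Disjoint A B)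
    (hRdiag : ∀ η, R η η = 0)
    (hR_nonneg : ∀ η ξ, 0 ≤ R η ξ)
    (hRsum : ∀ η, Summable (R η))
    (hlam : ∀ η, lam η = ∑' ξ, R η ξ)
    (hlampos : ∀ η, 0 < lam η)
    (hμpos : ∀ η, 0 < μ η)
    (hμprob : ∑' η, μ η = 1)
    (hμsummable : Summable μ)
    (hrev : ∀ η ξ, μ η * R η ξ = μ ξ * R ξ η)
    (hMfin : Summable fun η => lam η * μ η)
    (hprob : ∀ η, IsProbabilityMeasure (ℙ η))
    (hstart : ∀ η, ℙ η {ω | ω 0 = η} = 1)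
    (hMarkov : ∀ (η ξ : E) (C : Set (ℕ → E)), MeasurableSet C →
      ℙ η {ω | ω 1 = ξ ∧ (fun n => ω (n + 1)) ∈ C}
        = ENNReal.ofReal (R η ξ / lam η) * ℙ ξ C)
    (hrec : ∀ η ξ, ℙ η {ω | ∃ n, 0 < n ∧ ω n = ξ} = 1)
    (hrF : rF = (∑' η, Set.indicator A μ η)⁻¹ *
      ∑' η, Set.indicator A
        (fun η => lam η * μ η *
          (ℙ η {ω | retT B ω < retT ((A ∪ B) \ B) ω}).toReal) η) :
    ENNReal.ofReal ((∑' η, Set.indicator A μ η) * rF)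
      = ⨅ (u : E → ℝ) (_ : Summable fun η => μ η * u η ^ 2)
          (_ : ∀ η ∈ A, u η = 1) (_ : ∀ η ∈ B, u η = 0),
          (1 / 2 : ℝ≥0∞) * ∑' (η) (ξ), ENNReal.ofReal (μ η * R η ξ * (u ξ - u η) ^ 2) := by
  classical
  -- basic coefficient facts
  have hc0 : ∀ a b : E, 0 ≤ μ a * R a b := fun a b => mul_nonneg (hμpos a).le (hR_nonneg a b)
  have hsym : ∀ a b : E, μ a * R a b = μ b * R b a := hrev
  have hslice : ∀ a : E, Summable fun b => μ a * R a b := fun a => (hRsum a).mul_left (μ a)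
  have hrow : ∀ a : E, ∑' b, μ a * R a b = μ a * lam a := by
    intro a; rw [tsum_mul_left, hlam a]
  have hcs : Summable fun q : E × E => μ q.1 * R q.1 q.2 := by
    refine (summable_prod_of_nonneg (fun q => hc0 q.1 q.2)).mpr ⟨fun a => hslice a, ?_⟩
    exact hMfin.congr fun a => by rw [hrow a, mul_comm]
  have hpsum : ∀ a : E, Summable fun b => R a b / lam a := fun a => (hRsum a).div_const _
  have hpsum1 : ∀ a : E, ∑' b, R a b / lam a = 1 := by
    intro a; rw [tsum_div_const, ← hlam a, div_self (hlampos a).ne']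
  have hp0 : ∀ a b : E, 0 ≤ R a b / lam a :=
    fun a b => div_nonneg (hR_nonneg a b) (hlampos a).le
  -- the hitting event
  set Ev : Set (ℕ → E) := {ω | hitT B ω < hitT A ω} with hEvdef
  have hEvMeas : MeasurableSet Ev := by
    have hchar : Ev = ⋃ n, ({ω : ℕ → E | ω n ∈ B} ∩ ⋂ m, ⋂ _ : m ≤ n, {ω : ℕ → E | ω m ∉ A}) := by
      ext ω
      simp only [hEvdef, Set.mem_setOf_eq, Set.mem_iUnion, Set.mem_inter_iff, Set.mem_iInter,
        hitT_lt_hitT_iff]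
    rw [hchar]
    refine MeasurableSet.iUnion fun n => MeasurableSet.inter ?_
      (MeasurableSet.iInter fun m => MeasurableSet.iInter fun _ => ?_)
    · have : MeasurableSet ((fun ω : ℕ → E => ω n) ⁻¹' B) :=
        (measurable_pi_apply n) (Set.to_countable B).measurableSet
      exact this
    · have : MeasurableSet ((fun ω : ℕ → E => ω m) ⁻¹' Aᶜ) :=
        (measurable_pi_apply m) ((Set.to_countable Aᶜ).measurableSet)
      exact this
  have shiftMeas : Measurable (fun (ω : ℕ → E) (n : ℕ) => ω (n + 1)) :=
    measurable_pi_lambda _ fun n => measurable_pi_apply (n + 1)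
  -- conditioning on the starting point
  have hmeasInter : ∀ (a : E) (X : Set (ℕ → E)), ℙ a (X ∩ {ω | ω 0 = a}) = ℙ a X := by
    intro a X
    haveI := hprob a
    have hS : MeasurableSet {ω : ℕ → E | ω 0 = a} := by
      have : MeasurableSet ((fun ω : ℕ → E => ω 0) ⁻¹' {a}) :=
        (measurable_pi_apply 0) (measurableSet_singleton a)
      exact this
    have hcompl : ℙ a {ω : ℕ → E | ω 0 = a}ᶜ = 0 := by
      rw [measure_compl hS (measure_ne_top _ _), hstart a, measure_univ, tsub_self]
    refine le_antisymm (measure_mono Set.inter_subset_left) ?_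
    have hsub : X ⊆ (X ∩ {ω : ℕ → E | ω 0 = a}) ∪ {ω : ℕ → E | ω 0 = a}ᶜ := by
      intro x hx
      by_cases hxS : x ∈ {ω : ℕ → E | ω 0 = a}
      · exact Or.inl ⟨hx, hxS⟩
      · exact Or.inr hxS
    calc ℙ a X ≤ ℙ a ((X ∩ {ω : ℕ → E | ω 0 = a}) ∪ {ω : ℕ → E | ω 0 = a}ᶜ) :=
          measure_mono hsub
      _ ≤ ℙ a (X ∩ {ω : ℕ → E | ω 0 = a}) + ℙ a {ω : ℕ → E | ω 0 = a}ᶜ := measure_union_le _ _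
      _ = ℙ a (X ∩ {ω : ℕ → E | ω 0 = a}) := by rw [hcompl, add_zero]
  -- the harmonic function
  set g : E → ℝ := fun a => (ℙ a Ev).toReal with hgdef
  have hg0 : ∀ a, 0 ≤ g a := fun a => ENNReal.toReal_nonneg
  have hg1 : ∀ a, g a ≤ 1 := by
    intro a
    haveI := hprob a
    rw [hgdef]
    exact ENNReal.toReal_le_of_le_ofReal zero_le_one (by simpa using prob_le_one)
  have hgA : ∀ a ∈ A, g a = 0 := by
    intro a ha
    have hempty : Ev ∩ {ω : ℕ → E | ω 0 = a} = ∅ := by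
      ext ω
      simp only [hEvdef, Set.mem_inter_iff, Set.mem_setOf_eq, Set.mem_empty_iff_false,
        iff_false, not_and]
      intro hlt h0
      obtain ⟨n, _, hA'⟩ := hitT_lt_hitT_iff.mp hlt
      exact hA' 0 (Nat.zero_le n) (h0 ▸ ha)
    have := hmeasInter a Ev
    rw [hempty, measure_empty] at this
    rw [hgdef]
    simp only [← this, ENNReal.toReal_zero]
  have hgB : ∀ a ∈ B, g a = 1 := by
    intro a ha
    haveI := hprob a
    have hsub : {ω : ℕ → E | ω 0 = a} ⊆ Ev := by
      intro ω h0
      refine hitT_lt_hitT_iff.mpr ⟨0, h0 ▸ ha, fun m hm => ?_⟩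
      rw [Nat.le_zero.mp hm, h0]
      exact fun hmem => (hAB.ne_of_mem hmem ha) rfl
    have h1 : (1 : ℝ≥0∞) ≤ ℙ a Ev := by
      calc (1 : ℝ≥0∞) = ℙ a {ω : ℕ → E | ω 0 = a} := (hstart a).symm
        _ ≤ ℙ a Ev := measure_mono hsub
    have : ℙ a Ev = 1 := le_antisymm prob_le_one h1
    rw [hgdef]; simp only [this, ENNReal.toReal_one]
  -- first-step decomposition
  have hfsR : ∀ a : E, (ℙ a ((fun (ω : ℕ → E) (n : ℕ) => ω (n + 1)) ⁻¹' Ev)).toReal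
      = ∑' b, (R a b / lam a) * g b := by
    intro a
    have hdecomp : (fun (ω : ℕ → E) (n : ℕ) => ω (n + 1)) ⁻¹' Ev
        = ⋃ b, {ω : ℕ → E | ω 1 = b ∧ (fun n => ω (n + 1)) ∈ Ev} := by
      ext ω
      simp only [Set.mem_preimage, Set.mem_iUnion, Set.mem_setOf_eq]
      exact ⟨fun hmem => ⟨ω 1, rfl, hmem⟩, fun ⟨b, _, hmem⟩ => hmem⟩
    have hmeas : ∀ b : E, MeasurableSet {ω : ℕ → E | ω 1 = b ∧ (fun n => ω (n + 1)) ∈ Ev} := by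
      intro b
      have h1 : MeasurableSet ((fun ω : ℕ → E => ω 1) ⁻¹' {b}) :=
        (measurable_pi_apply 1) (measurableSet_singleton b)
      have h2 : MeasurableSet ((fun (ω : ℕ → E) (n : ℕ) => ω (n + 1)) ⁻¹' Ev) :=
        shiftMeas hEvMeas
      exact h1.inter h2
    have hdisj : Pairwise (Function.onFun Disjoint
        fun b => {ω : ℕ → E | ω 1 = b ∧ (fun n => ω (n + 1)) ∈ Ev}) := by
      intro b b' hne
      refine Set.disjoint_left.mpr ?_
      rintro ω ⟨h1, -⟩ ⟨h2, -⟩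
      exact hne (h1.symm.trans h2)
    rw [hdecomp, measure_iUnion hdisj hmeas]
    have hterm : ∀ b : E, ℙ a {ω : ℕ → E | ω 1 = b ∧ (fun n => ω (n + 1)) ∈ Ev}
        = ENNReal.ofReal (R a b / lam a) * ℙ b Ev := fun b => hMarkov a b Ev hEvMeas
    rw [tsum_congr hterm, ENNReal.tsum_toReal_eq (fun b =>
      ENNReal.mul_ne_top ENNReal.ofReal_ne_top (measure_ne_top _ _))]
    exact tsum_congr fun b => by
      rw [ENNReal.toReal_mul, ENNReal.toReal_ofReal (hp0 a b)]
  -- harmonicity of g away from A ∪ B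
  have hgfs : ∀ a, a ∉ A → a ∉ B → g a = ∑' b, (R a b / lam a) * g b := by
    intro a haA haB
    have hEq : Ev ∩ {ω : ℕ → E | ω 0 = a}
        = ((fun (ω : ℕ → E) (n : ℕ) => ω (n + 1)) ⁻¹' Ev) ∩ {ω : ℕ → E | ω 0 = a} := by
      ext ω
      simp only [hEvdef, Set.mem_inter_iff, Set.mem_setOf_eq, Set.mem_preimage]
      constructor
      · rintro ⟨hlt, h0⟩
        refine ⟨?_, h0⟩
        obtain ⟨n, hnB, hnA⟩ := hitT_lt_hitT_iff.mp hlt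
        have hn0 : n ≠ 0 := by rintro rfl; exact haB (h0 ▸ hnB)
        obtain ⟨k, rfl⟩ := Nat.exists_eq_succ_of_ne_zero hn0
        exact hitT_lt_hitT_iff.mpr ⟨k, hnB, fun j hj => hnA (j + 1) (by omega)⟩
      · rintro ⟨hlt, h0⟩
        refine ⟨?_, h0⟩
        obtain ⟨k, hkB, hkA⟩ := hitT_lt_hitT_iff.mp hlt
        refine hitT_lt_hitT_iff.mpr ⟨k + 1, hkB, fun m hm => ?_⟩
        cases m with
        | zero => exact fun hmem => haA (h0 ▸ hmem)
        | succ j => exact hkA j (by omega)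
    have hmeq : ℙ a Ev = ℙ a ((fun (ω : ℕ → E) (n : ℕ) => ω (n + 1)) ⁻¹' Ev) := by
      rw [← hmeasInter a Ev, hEq, hmeasInter]
    rw [hgdef]
    simp only [hmeq]
    exact hfsR a
  -- the equilibrium potential
  set h : E → ℝ := fun a => 1 - g a with hhdef
  have hh1 : ∀ a, |h a| ≤ 1 := by
    intro a
    have h1 := hg0 a
    have h2 := hg1 a
    rw [hhdef, abs_le]
    constructor <;> simp <;> linarith
  have hhA : ∀ a ∈ A, h a = 1 := by
    intro a ha; rw [hhdef]; simp [hgA a ha]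
  have hhB : ∀ a ∈ B, h a = 0 := by
    intro a ha; rw [hhdef]; simp [hgB a ha]
  have hpg : ∀ a, Summable fun b => (R a b / lam a) * g b := by
    intro a
    refine summable_of_bound (hpsum a) 1 fun b => ?_
    rw [abs_mul, one_mul, abs_of_nonneg (hp0 a b), abs_of_nonneg (hg0 b)]
    calc R a b / lam a * g b ≤ R a b / lam a * 1 :=
          mul_le_mul_of_nonneg_left (hg1 b) (hp0 a b)
      _ = R a b / lam a := mul_one _
  have hharm : ∀ a, a ∉ A → a ∉ B → ∑' b, μ a * R a b * (h a - h b) = 0 := by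
    intro a haA haB
    have e1 : ∀ b, μ a * R a b * (h a - h b)
        = (μ a * lam a) * ((R a b / lam a) * g b - g a * (R a b / lam a)) := by
      intro b
      rw [hhdef]
      field_simp [(hlampos a).ne']
      ring
    rw [tsum_congr e1, tsum_mul_left,
      Summable.tsum_sub (hpg a) ((hpsum a).mul_left (g a)), tsum_mul_left, hpsum1 a, mul_one,
      ← hgfs a haA haB, sub_self, mul_zero]
  -- capacity as a sum
  set Sr : ℝ := ∑' a, A.indicator (fun a => ∑' b, μ a * R a b * g b) a with hSrdef
  have hSr0 : 0 ≤ Sr := tsum_nonneg fun a =>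
    Set.indicator_nonneg (fun x _ => tsum_nonneg fun b => mul_nonneg (hc0 x b) (hg0 b)) a
  -- identification of the rate sum with Sr
  have hAd : (A ∪ B) \ B = A := Set.union_diff_cancel_right (by simp [hAB.inter_eq])
  have hretEv : {ω : ℕ → E | retT B ω < retT A ω}
      = (fun (ω : ℕ → E) (n : ℕ) => ω (n + 1)) ⁻¹' Ev := by
    ext ω
    simp only [Set.mem_setOf_eq, Set.mem_preimage, hEvdef]
    exact retT_lt_retT_iff
  have hterm : ∀ a : E, lam a * μ a * (ℙ a {ω | retT B ω < retT ((A ∪ B) \ B) ω}).toReal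
      = ∑' b, μ a * R a b * g b := by
    intro a
    rw [hAd, hretEv, hfsR a, ← tsum_mul_left]
    refine tsum_congr fun b => ?_
    field_simp [(hlampos a).ne']
  have hSeq : (∑' η, Set.indicator A
      (fun η => lam η * μ η * (ℙ η {ω | retT B ω < retT ((A ∪ B) \ B) ω}).toReal) η) = Sr := by
    rw [hSrdef]
    exact tsum_congr fun a => congrFun (Set.indicator_congr fun x _ => hterm x) a
  -- reduction of the left-hand side
  have hLHS : ENNReal.ofReal ((∑' η, Set.indicator A μ η) * rF) = ENNReal.ofReal Sr := by
    rw [hrF, hSeq]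
    rcases A.eq_empty_or_nonempty with hA0 | ⟨a0, ha0⟩
    · have h1 : (∑' η, Set.indicator A μ η) = 0 := by rw [hA0]; simp
      have h2 : Sr = 0 := by rw [hSrdef, hA0]; simp
      rw [h1, h2, zero_mul]
    · have hsumm : Summable (Set.indicator A μ) := hμsummable.indicator A
      have hpos : 0 < ∑' η, Set.indicator A μ η := by
        have hle := Summable.le_tsum hsumm a0 fun b _ =>
          Set.indicator_nonneg (fun x _ => (hμpos x).le) b
        rw [Set.indicator_of_mem ha0] at hle
        exact lt_of_lt_of_le (hμpos a0) hle
      rw [← mul_assoc, mul_inv_cancel₀ hpos.ne', one_mul]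
  rw [hLHS]
  -- summabilities for bounded potentials
  have hsqsum : ∀ v : E → ℝ, (∀ a, |v a| ≤ 1) →
      Summable fun q : E × E => μ q.1 * R q.1 q.2 * (v q.2 - v q.1) ^ 2 := by
    intro v hv
    exact key_summable (fun a b => μ a * R a b) hc0 hcs _ 4
      (fun q => diff_sq_bound _ _ (hv q.2) (hv q.1))
  have hsqslice : ∀ (v : E → ℝ), (∀ a, |v a| ≤ 1) →
      ∀ a, Summable fun b => μ a * R a b * (v b - v a) ^ 2 := by
    intro v hv a
    refine summable_of_bound (hslice a) 4 fun b => ?_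
    rw [abs_mul, abs_of_nonneg (hc0 a b)]
    calc μ a * R a b * |(v b - v a) ^ 2|
        ≤ μ a * R a b * 4 := mul_le_mul_of_nonneg_left (diff_sq_bound _ _ (hv b) (hv a)) (hc0 a b)
      _ = 4 * (μ a * R a b) := by ring
  -- the Dirichlet identity for h
  have hDh : ∑' q : E × E, μ q.1 * R q.1 q.2 * (h q.2 - h q.1) ^ 2 = 2 * Sr := by
    have h1 : ∑' q : E × E, μ q.1 * R q.1 q.2 * (h q.2 - h q.1) ^ 2
        = 2 * ∑' a, A.indicator (fun a => ∑' b, μ a * R a b * (1 - h b)) a :=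
      dirichlet_boundary (fun a b => μ a * R a b) hsym hc0 hcs A B hAB h hh1 hhA hhB hharm
    rw [h1, hSrdef]
    have h2 : (fun a : E => ∑' b, μ a * R a b * (1 - h b))
        = fun a => ∑' b, μ a * R a b * g b := by
      funext a
      refine tsum_congr fun b => ?_
      rw [hhdef]
      ring_nf
    rw [h2]
  have half2 : (1 / 2 : ℝ≥0∞) * 2 = 1 := by
    rw [one_div, ENNReal.inv_mul_cancel two_ne_zero ENNReal.ofNat_ne_top]
  have hofReal2 : ∀ x : ℝ, 0 ≤ x → (1 / 2 : ℝ≥0∞) * ENNReal.ofReal (2 * x) = ENNReal.ofReal x := by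
    intro x hx
    rw [ENNReal.ofReal_mul (by norm_num : (0:ℝ) ≤ 2), ENNReal.ofReal_ofNat, ← mul_assoc,
      half2, one_mul]
  -- conclusion
  refine le_antisymm ?_ ?_
  · -- ofReal Sr ≤ infimum
    refine le_iInf fun u => le_iInf fun hsumu => le_iInf fun huA => le_iInf fun huB => ?_
    set w : E → ℝ := fun a => max 0 (min 1 (u a)) with hwdef
    have hw1 : ∀ a, |w a| ≤ 1 := by
      intro a
      have h0 : (0:ℝ) ≤ w a := le_max_left _ _
      have h1 : w a ≤ 1 := max_le zero_le_one (min_le_left _ _)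
      rw [abs_le]; exact ⟨by linarith, h1⟩
    have hwA : ∀ a ∈ A, w a = 1 := by
      intro a ha; rw [hwdef]; simp [huA a ha]
    have hwB : ∀ a ∈ B, w a = 0 := by
      intro a ha; rw [hwdef]; simp [huB a ha]
    have hDw : ∑' q : E × E, μ q.1 * R q.1 q.2 * (h q.2 - h q.1) ^ 2
        ≤ ∑' q : E × E, μ q.1 * R q.1 q.2 * (w q.2 - w q.1) ^ 2 :=
      dirichlet_min (fun a b => μ a * R a b) hsym hc0 hcs A B h w hh1 hw1 hhA hhB hwA hwB hharm
    have hdouble : ∑' (a) (b), ENNReal.ofReal (μ a * R a b * (w b - w a) ^ 2)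
        = ENNReal.ofReal (∑' q : E × E, μ q.1 * R q.1 q.2 * (w q.2 - w q.1) ^ 2) :=
      ofReal_double (fun a b => μ a * R a b * (w b - w a) ^ 2)
        (fun a b => mul_nonneg (hc0 a b) (sq_nonneg _)) (hsqsum w hw1) (hsqslice w hw1)
    calc ENNReal.ofReal Sr
        = (1 / 2 : ℝ≥0∞) * ENNReal.ofReal (2 * Sr) := (hofReal2 Sr hSr0).symm
      _ = (1 / 2 : ℝ≥0∞) * ENNReal.ofReal
            (∑' q : E × E, μ q.1 * R q.1 q.2 * (h q.2 - h q.1) ^ 2) := by rw [hDh]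
      _ ≤ (1 / 2 : ℝ≥0∞) * ENNReal.ofReal
            (∑' q : E × E, μ q.1 * R q.1 q.2 * (w q.2 - w q.1) ^ 2) :=
          mul_le_mul_right (ENNReal.ofReal_le_ofReal hDw) _
      _ = (1 / 2 : ℝ≥0∞) * ∑' (a) (b), ENNReal.ofReal (μ a * R a b * (w b - w a) ^ 2) := by
          rw [hdouble]
      _ ≤ (1 / 2 : ℝ≥0∞) * ∑' (a) (b), ENNReal.ofReal (μ a * R a b * (u b - u a) ^ 2) := by
          refine mul_le_mul_right (ENNReal.tsum_le_tsum fun a => ENNReal.tsum_le_tsum fun b =>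
            ENNReal.ofReal_le_ofReal ?_) _
          refine mul_le_mul_of_nonneg_left ?_ (hc0 a b)
          have hlip : |w b - w a| ≤ |u b - u a| := clamp_lip (u b) (u a)
          calc (w b - w a) ^ 2 = |w b - w a| ^ 2 := (sq_abs _).symm
            _ ≤ |u b - u a| ^ 2 := pow_le_pow_left₀ (abs_nonneg _) hlip 2
            _ = (u b - u a) ^ 2 := sq_abs _
  · -- infimum ≤ ofReal Sr, witness h
    have hhsum : Summable fun a => μ a * h a ^ 2 := by
      refine summable_of_bound hμsummable 1 fun a => ?_
      have h1 : |h a ^ 2| ≤ 1 := by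
        rw [abs_of_nonneg (sq_nonneg _)]
        nlinarith [abs_le.mp (hh1 a)]
      rw [abs_mul, abs_of_nonneg (hμpos a).le]
      calc μ a * |h a ^ 2| ≤ μ a * 1 := mul_le_mul_of_nonneg_left h1 (hμpos a).le
        _ = 1 * μ a := by ring
    refine iInf_le_of_le h (iInf_le_of_le hhsum (iInf_le_of_le hhA (iInf_le_of_le hhB
      (le_of_eq ?_))))
    have hdouble : ∑' (a) (b), ENNReal.ofReal (μ a * R a b * (h b - h a) ^ 2)
        = ENNReal.ofReal (∑' q : E × E, μ q.1 * R q.1 q.2 * (h q.2 - h q.1) ^ 2) :=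
      ofReal_double (fun a b => μ a * R a b * (h b - h a) ^ 2)
        (fun a b => mul_nonneg (hc0 a b) (sq_nonneg _)) (hsqsum h hh1) (hsqslice h hh1)
    rw [hdouble, hDh, hofReal2 Sr hSr0]
end

section
/- Let A, B be disjoint subsets of F ⊆ E, for a positive recurrent reversible Markov chain as above. Then the mean set rate satisfies μ(A) r_F(A,B) = (1/2){ Cap(A, F∖A) + Cap(B, F∖B) − Cap(A∪B, F∖(A∪B)) }. -/
open MeasureTheory
open scoped ENNReal

/-- The capacity `Cap(X,Y) = ∑_{η∈X} lam(η) μ(η) P_η[T_Y⁺ < T_X⁺]`, computed from the jump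
chain `ℙ` of a positive recurrent reversible continuous-time chain. -/
noncomputable def capSum {E : Type*} [MeasurableSpace E]
    (lam μ : E → ℝ) (ℙ : E → Measure (ℕ → E)) (X Y : Set E) : ℝ :=
  ∑' η, Set.indicator X
    (fun η => lam η * μ η * (ℙ η {ω | retT Y ω < retT X ω}).toReal) η


section Stmt6Aux
open Set
open scoped Classical

namespace Stmt6
variable {E : Type*}


variable {E : Type*}

lemma lt_retT_iff (Y : Set E) (ω : ℕ → E) (n : ℕ) :
    (n : ℕ∞) < retT Y ω ↔ ∀ m, 0 < m → m ≤ n → ω m ∉ Y := by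
  constructor
  · intro h m hm hmn hY
    have h1 : retT Y ω ≤ (m : ℕ∞) := iInf₂_le m ⟨hm, hY⟩
    have h2 : (n : ℕ∞) < (m : ℕ∞) := lt_of_lt_of_le h h1
    exact absurd (Nat.cast_lt.mp h2) (by omega)
  · intro h
    have h2 : ((n + 1 : ℕ) : ℕ∞) ≤ retT Y ω := by
      refine le_iInf₂ fun m hm => ?_
      have : n < m := by
        by_contra hc
        exact h m hm.1 (by omega) hm.2
      exact_mod_cast this
    calc (n : ℕ∞) < ((n + 1 : ℕ) : ℕ∞) := by exact_mod_cast Nat.lt_succ_self n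
      _ ≤ _ := h2

lemma retT_lt_iff (X Y : Set E) (ω : ℕ → E) :
    retT X ω < retT Y ω ↔
      ∃ n, 0 < n ∧ ω n ∈ X ∧ ∀ m, 0 < m → m ≤ n → ω m ∉ Y := by
  rw [show retT X ω = ⨅ (n : ℕ) (_ : 0 < n ∧ ω n ∈ X), (n : ℕ∞) from rfl]
  simp only [iInf_lt_iff]
  constructor
  · rintro ⟨n, ⟨hn, hX⟩, hlt⟩
    exact ⟨n, hn, hX, (lt_retT_iff Y ω n).1 hlt⟩
  · rintro ⟨n, hn, hX, hY⟩
    exact ⟨n, ⟨hn, hX⟩, (lt_retT_iff Y ω n).2 hY⟩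

/-- first-return-to-`F`-lands-in-`C` at time `n+1`. -/
def Dset (F C : Set E) (n : ℕ) : Set (ℕ → E) :=
  {ω | ω (n + 1) ∈ C ∧ ∀ m, 0 < m → m < n + 1 → ω m ∉ F}

def evSet (F C : Set E) : Set (ℕ → E) := ⋃ n, Dset F C n

lemma event_eq (F X Y : Set E) (hXF : X ⊆ F) (hYF : Y ⊆ F) (hXY : Disjoint X Y)
    (hcov : F ⊆ X ∪ Y) :
    {ω : ℕ → E | retT X ω < retT Y ω} = evSet F X := by
  ext ω
  rw [Set.mem_setOf_eq, retT_lt_iff]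
  constructor
  · rintro ⟨n, hn, hX, hY⟩
    have hex : ∃ m, 0 < m ∧ m ≤ n ∧ ω m ∈ F := ⟨n, hn, le_refl n, hXF hX⟩
    classical
    set k := Nat.find hex with hk
    obtain ⟨hk0, hkn, hkF⟩ := Nat.find_spec hex
    have hkX : ω k ∈ X := by
      rcases hcov hkF with h | h
      · exact h
      · exact absurd h (hY k hk0 hkn)
    refine Set.mem_iUnion.2 ⟨k - 1, ?_, ?_⟩
    · rwa [show k - 1 + 1 = k by omega]
    · intro m hm hmk hF
      rw [show k - 1 + 1 = k by omega] at hmk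
      exact Nat.find_min hex hmk ⟨hm, by omega, hF⟩
  · intro h
    obtain ⟨n, hX, hF⟩ := Set.mem_iUnion.1 h
    refine ⟨n + 1, by omega, hX, fun m hm hmn hY => ?_⟩
    rcases Nat.lt_or_ge m (n + 1) with h1 | h1
    · exact hF m hm h1 (hYF hY)
    · have : m = n + 1 := by omega
      subst this
      exact (hXY.le_bot ⟨hX, hY⟩ : (⊥ : Prop))

lemma ev_union (F C1 C2 : Set E) : evSet F (C1 ∪ C2) = evSet F C1 ∪ evSet F C2 := by
  ext ω
  simp only [evSet, Set.mem_iUnion, Set.mem_union, Dset, Set.mem_setOf_eq]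
  constructor
  · rintro ⟨n, hC | hC, hF⟩
    · exact Or.inl ⟨n, hC, hF⟩
    · exact Or.inr ⟨n, hC, hF⟩
  · rintro (⟨n, hC, hF⟩ | ⟨n, hC, hF⟩)
    · exact ⟨n, Or.inl hC, hF⟩
    · exact ⟨n, Or.inr hC, hF⟩

lemma Dset_disj (F C : Set E) (hCF : C ⊆ F) : Pairwise (Function.onFun Disjoint (Dset F C)) := by
  intro j k hjk
  rw [Function.onFun, Set.disjoint_left]
  rintro ω ⟨hj1, hj2⟩ ⟨hk1, hk2⟩
  rcases Nat.lt_or_ge j k with h | h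
  · exact hk2 (j + 1) (by omega) (by omega) (hCF hj1)
  · have : k < j := by omega
    exact hj2 (k + 1) (by omega) (by omega) (hCF hk1)

lemma ev_disj (F C1 C2 : Set E) (hC1 : C1 ⊆ F) (hC2 : C2 ⊆ F) (h12 : Disjoint C1 C2) :
    Disjoint (evSet F C1) (evSet F C2) := by
  rw [Set.disjoint_left]
  intro ω h1 h2
  obtain ⟨n, hn1, hn2⟩ := Set.mem_iUnion.1 h1
  obtain ⟨k, hk1, hk2⟩ := Set.mem_iUnion.1 h2
  have hnk : n = k := by
    by_contra hne
    rcases Nat.lt_or_ge n k with h | h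
    · exact hk2 (n + 1) (by omega) (by omega) (hC1 hn1)
    · exact hn2 (k + 1) (by omega) (by omega) (hC2 hk1)
  subst hnk
  exact h12.le_bot ⟨hn1, hk1⟩





section meas
variable [Countable E] [MeasurableSpace E] [MeasurableSingletonClass E]

lemma meas_coord (k : ℕ) (s : Set E) : MeasurableSet {ω : ℕ → E | ω k ∈ s} :=
  measurable_pi_apply k s.to_countable.measurableSet

def Cyl (p : ℕ → E) (n : ℕ) : Set (ℕ → E) := {ω | ∀ i ≤ n, ω i = p i}

lemma meas_Cyl (p : ℕ → E) (n : ℕ) : MeasurableSet (Cyl p n) := by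
  have : Cyl p n = ⋂ (i : ℕ) (_ : i ≤ n), {ω : ℕ → E | ω i ∈ ({p i} : Set E)} := by
    ext ω; simp [Cyl]
  rw [this]
  exact MeasurableSet.iInter fun i => MeasurableSet.iInter fun _ => meas_coord i _

lemma meas_Dset (F C : Set E) (n : ℕ) : MeasurableSet (Dset F C n) := by
  have : Dset F C n = {ω : ℕ → E | ω (n+1) ∈ C} ∩
      ⋂ (m : ℕ) (_ : 0 < m) (_ : m < n + 1), {ω : ℕ → E | ω m ∈ Fᶜ} := by
    ext ω; simp only [Dset, Set.mem_setOf_eq, Set.mem_inter_iff, Set.mem_iInter,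
      Set.mem_compl_iff]
  rw [this]
  exact (meas_coord _ _).inter <| MeasurableSet.iInter fun m =>
    MeasurableSet.iInter fun _ => MeasurableSet.iInter fun _ => meas_coord m _

lemma meas_ev (F C : Set E) : MeasurableSet (evSet F C) :=
  MeasurableSet.iUnion fun n => meas_Dset F C n

def Sset {n : ℕ} (q : Fin (n + 2) → E) : Set (ℕ → E) := {ω | ∀ i : Fin (n + 2), ω i = q i}

lemma meas_Sset {n : ℕ} (q : Fin (n + 2) → E) : MeasurableSet (Sset q) := by
  have : Sset q = ⋂ i : Fin (n + 2), {ω : ℕ → E | ω i ∈ ({q i} : Set E)} := by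
    ext ω; simp [Sset]
  rw [this]
  exact MeasurableSet.iInter fun i => meas_coord _ _

variable (R : E → E → ℝ) (lam : E → ℝ) (ℙ : E → Measure (ℕ → E))

lemma meas_inter_start (hprob : ∀ η, IsProbabilityMeasure (ℙ η))
    (hstart : ∀ η, ℙ η {ω | ω 0 = η} = 1) (η : E) (t : Set (ℕ → E)) :
    ℙ η ({ω | ω 0 = η} ∩ t) = ℙ η t := by
  have h0 : MeasurableSet {ω : ℕ → E | ω 0 = η} := by
    have := meas_coord (E := E) 0 {η}; simpa using this
  haveI := hprob η
  have hc : ℙ η ({ω : ℕ → E | ω 0 = η}ᶜ) = 0 := by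
    rw [measure_compl h0 (measure_ne_top _ _), hstart, measure_univ, tsub_self]
  have h1 : ℙ η (t \ {ω | ω 0 = η}) = 0 :=
    measure_mono_null (fun ω hω => hω.2) hc
  have h2 := measure_inter_add_diff (μ := ℙ η) t h0
  rw [h1, add_zero] at h2
  rw [Set.inter_comm]; exact h2

lemma cylP (hprob : ∀ η, IsProbabilityMeasure (ℙ η))
    (hstart : ∀ η, ℙ η {ω | ω 0 = η} = 1)
    (hMarkov : ∀ (η ξ : E) (C : Set (ℕ → E)), MeasurableSet C →
      ℙ η {ω | ω 1 = ξ ∧ (fun n => ω (n + 1)) ∈ C}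
        = ENNReal.ofReal (R η ξ / lam η) * ℙ ξ C)
    (n : ℕ) (p : ℕ → E) :
    ℙ (p 0) (Cyl p n)
      = ∏ i ∈ Finset.range n, ENNReal.ofReal (R (p i) (p (i + 1)) / lam (p i)) := by
  induction n generalizing p with
  | zero =>
    have hc : Cyl p 0 = {ω : ℕ → E | ω 0 = p 0} := by
      ext ω; simp [Cyl]
    rw [hc, hstart]
    simp
  | succ n ih =>
    have hset : Cyl p (n + 1) = {ω : ℕ → E | ω 0 = p 0} ∩
        {ω : ℕ → E | ω 1 = p 1 ∧ (fun k => ω (k + 1)) ∈ Cyl (fun k => p (k + 1)) n} := by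
      ext ω
      simp only [Cyl, Set.mem_setOf_eq, Set.mem_inter_iff]
      constructor
      · intro h
        exact ⟨h 0 (by omega), h 1 (by omega), fun i hi => h (i + 1) (by omega)⟩
      · rintro ⟨h0, h1, h2⟩ i hi
        match i with
        | 0 => exact h0
        | (k + 1) => exact h2 k (by omega)
    rw [hset, meas_inter_start ℙ hprob hstart, hMarkov _ _ _ (meas_Cyl _ _),
      ih (fun k => p (k + 1)), Finset.prod_range_succ']
    ring
end meas




/-- extension of a finite path to `ℕ → E`. -/
def extq {n : ℕ} (q : Fin (n + 2) → E) : ℕ → E := fun i => q ⟨min i (n + 1), by omega⟩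

lemma extq_zero {n : ℕ} (q : Fin (n + 2) → E) : extq q 0 = q 0 := by
  simp [extq]

lemma extq_of_le {n : ℕ} (q : Fin (n + 2) → E) (i : ℕ) (h : i ≤ n + 1) :
    extq q i = q ⟨i, by omega⟩ := by
  simp [extq, Nat.min_eq_left h]

def conds (F C : Set E) {n : ℕ} (q : Fin (n + 2) → E) : Prop :=
  q (Fin.last (n + 1)) ∈ C ∧ ∀ i : Fin (n + 2), 0 < (i : ℕ) → (i : ℕ) < n + 1 → q i ∉ F

noncomputable def prodW (R : E → E → ℝ) (lam : E → ℝ) (n : ℕ) (p : ℕ → E) : ℝ≥0∞ :=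
  ∏ i ∈ Finset.range (n + 1), ENNReal.ofReal (R (p i) (p (i + 1)) / lam (p i))


section main
variable [Countable E] [MeasurableSpace E] [MeasurableSingletonClass E]
variable (R : E → E → ℝ) (lam μ : E → ℝ) (ℙ : E → Measure (ℕ → E))

lemma start_compl (hprob : ∀ η, IsProbabilityMeasure (ℙ η))
    (hstart : ∀ η, ℙ η {ω | ω 0 = η} = 1) (η : E) :
    ℙ η ({ω : ℕ → E | ω 0 = η}ᶜ) = 0 := by
  have h0 : MeasurableSet {ω : ℕ → E | ω 0 = η} := by
    have := meas_coord (E := E) 0 {η}; simpa using this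
  haveI := hprob η
  rw [measure_compl h0 (measure_ne_top _ _), hstart, measure_univ, tsub_self]

lemma Sq_prob (hprob : ∀ η, IsProbabilityMeasure (ℙ η))
    (hstart : ∀ η, ℙ η {ω | ω 0 = η} = 1)
    (hMarkov : ∀ (η ξ : E) (C : Set (ℕ → E)), MeasurableSet C →
      ℙ η {ω | ω 1 = ξ ∧ (fun n => ω (n + 1)) ∈ C}
        = ENNReal.ofReal (R η ξ / lam η) * ℙ ξ C)
    {n : ℕ} (q : Fin (n + 2) → E) (η : E) :
    ℙ η (Sset q) = if q 0 = η then prodW R lam n (extq q) else 0 := by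
  split_ifs with h
  · have hs : Sset q = Cyl (extq q) (n + 1) := by
      ext ω
      simp only [Sset, Cyl, Set.mem_setOf_eq]
      constructor
      · intro hi i hle
        rw [extq_of_le q i hle]
        exact hi ⟨i, by omega⟩
      · intro hi i
        have h2 := hi i (by omega : (i : ℕ) ≤ n + 1)
        rw [extq_of_le q i (by omega)] at h2
        simpa using h2
    have h0 : extq q 0 = η := by rw [extq_zero, h]
    rw [hs, ← h0, cylP R lam ℙ hprob hstart hMarkov (n + 1) (extq q)]
    rfl
  · have hsub : Sset q ⊆ {ω : ℕ → E | ω 0 = η}ᶜ := by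
      intro ω hω hc
      apply h
      have h0 := hω 0
      simp only [Fin.val_zero] at h0
      rw [← h0]
      exact hc
    exact measure_mono_null hsub (start_compl ℙ hprob hstart η)

lemma D_decomp (F C : Set E) (n : ℕ) (η : E) :
    ℙ η (Dset F C n) = ∑' q : Fin (n + 2) → E, if conds F C q then ℙ η (Sset q) else 0 := by
  classical
  have hset : Dset F C n = ⋃ q : Fin (n + 2) → E, if conds F C q then Sset q else ∅ := by
    ext ω
    simp only [Set.mem_iUnion]
    constructor
    · intro hω
      refine ⟨fun i => ω i, ?_⟩
      rw [if_pos]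
      · intro i; rfl
      · obtain ⟨h1, h2⟩ := hω
        refine ⟨by simpa using h1, fun i hi1 hi2 => h2 i hi1 hi2⟩
    · rintro ⟨q, hq⟩
      split_ifs at hq with hc
      · obtain ⟨h1, h2⟩ := hc
        constructor
        · have hl := hq (Fin.last (n + 1))
          simp only [Fin.val_last] at hl
          rw [hl]; exact h1
        · intro m hm1 hm2
          have hm := hq ⟨m, by omega⟩
          simp only at hm
          rw [hm]
          exact h2 ⟨m, by omega⟩ hm1 hm2
      · exact absurd hq (Set.notMem_empty ω)
  rw [hset, measure_iUnion]
  · refine tsum_congr fun q => ?_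
    rw [apply_ite (ℙ η), measure_empty]
  · intro q q' hqq'
    have hdisj : Disjoint (Sset q) (Sset q') := by
      rw [Set.disjoint_left]
      intro ω h1 h2
      exact hqq' (funext fun i => by rw [← h1 i, ← h2 i])
    dsimp only [Function.onFun]
    split_ifs <;>
      first
        | exact hdisj
        | simp
  · intro q
    split_ifs
    exacts [meas_Sset q, MeasurableSet.empty]

noncomputable def Wq (R : E → E → ℝ) (lam μ : E → ℝ) {n : ℕ} (q : Fin (n + 2) → E) : ℝ≥0∞ :=
  ENNReal.ofReal (lam (q 0) * μ (q 0)) * prodW R lam n (extq q)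

noncomputable def Tn (R : E → E → ℝ) (lam μ : E → ℝ) (F X C : Set E) (n : ℕ) : ℝ≥0∞ :=
  ∑' q : Fin (n + 2) → E, if q 0 ∈ X ∧ conds F C q then Wq R lam μ q else 0

lemma key_n (hprob : ∀ η, IsProbabilityMeasure (ℙ η))
    (hstart : ∀ η, ℙ η {ω | ω 0 = η} = 1)
    (hMarkov : ∀ (η ξ : E) (C : Set (ℕ → E)), MeasurableSet C →
      ℙ η {ω | ω 1 = ξ ∧ (fun n => ω (n + 1)) ∈ C}
        = ENNReal.ofReal (R η ξ / lam η) * ℙ ξ C)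
    (F X C : Set E) (n : ℕ) :
    ∑' η, X.indicator (fun η => ENNReal.ofReal (lam η * μ η) * ℙ η (Dset F C n)) η
      = Tn R lam μ F X C n := by
  classical
  have hη : ∀ η, X.indicator (fun η => ENNReal.ofReal (lam η * μ η) * ℙ η (Dset F C n)) η
      = ∑' q : Fin (n + 2) → E,
          if q 0 = η ∧ q 0 ∈ X ∧ conds F C q then Wq R lam μ q else 0 := by
    intro η
    rw [Set.indicator_apply]
    split_ifs with hX
    · rw [D_decomp ℙ F C n η, ← ENNReal.tsum_mul_left]
      refine tsum_congr fun q => ?_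
      rw [mul_ite, mul_zero, Sq_prob R lam ℙ hprob hstart hMarkov q η]
      by_cases hc : conds F C q
      · by_cases h0 : q 0 = η
        · simp only [hc, h0, if_true, hX, and_true, true_and, if_pos]
          rw [Wq, h0]
        · simp [hc, h0]
      · simp [hc]
    · symm
      refine ENNReal.tsum_eq_zero.mpr fun q => ?_
      rw [if_neg]
      rintro ⟨h0, h1, -⟩
      exact hX (h0 ▸ h1)
  rw [tsum_congr hη, ENNReal.tsum_comm]
  refine tsum_congr fun q => ?_
  rw [tsum_eq_single (q 0) (fun η hη' => by
    rw [if_neg]; rintro ⟨h0, -⟩; exact hη' h0.symm)]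
  by_cases h : q 0 ∈ X ∧ conds F C q
  · simp [h]
  · simp [h]

end main

section rev
variable [Countable E] [MeasurableSpace E] [MeasurableSingletonClass E]
variable (R : E → E → ℝ) (lam μ : E → ℝ)

lemma chainrev (hrev : ∀ η ξ, μ η * R η ξ = μ ξ * R ξ η) :
    ∀ (n : ℕ) (p p' : ℕ → E), (∀ i ≤ n, p' i = p (n - i)) →
    μ (p 0) * ∏ i ∈ Finset.range n, R (p i) (p (i + 1))
      = μ (p n) * ∏ i ∈ Finset.range n, R (p' i) (p' (i + 1)) := by
  intro n
  induction n with
  | zero => intro p p' _; simp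
  | succ n ih =>
    intro p p' hp
    have ih' := ih p (fun i => p' (i + 1)) (fun i hi => by
      show p' (i + 1) = p (n - i)
      rw [hp (i + 1) (by omega)]; congr 1; omega)
    have h0 : p' 0 = p (n + 1) := by simpa using hp 0 (by omega)
    have h1 : p' 1 = p n := by
      rw [hp 1 (by omega)]; congr 1
    calc μ (p 0) * ∏ i ∈ Finset.range (n + 1), R (p i) (p (i + 1))
        = (μ (p n) * ∏ i ∈ Finset.range n, R (p' (i + 1)) (p' (i + 1 + 1)))
            * R (p n) (p (n + 1)) := by
          rw [Finset.prod_range_succ, ← mul_assoc, ih']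
      _ = (μ (p n) * R (p n) (p (n + 1))) * ∏ i ∈ Finset.range n, R (p' (i + 1)) (p' (i + 1 + 1)) := by
          ring
      _ = (μ (p (n + 1)) * R (p (n + 1)) (p n)) * ∏ i ∈ Finset.range n, R (p' (i + 1)) (p' (i + 1 + 1)) := by
          rw [hrev]
      _ = μ (p (n + 1)) * ∏ i ∈ Finset.range (n + 1), R (p' i) (p' (i + 1)) := by
          rw [Finset.prod_range_succ' (fun i => R (p' i) (p' (i + 1)))]
          rw [h0, h1]
          ring

lemma div_helper (a m NN LL : ℝ) (ha : a ≠ 0) : a * m * (NN / (LL * a)) = m * NN / LL := by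
  rcases eq_or_ne LL 0 with h | h
  · simp [h]
  · field_simp

lemma wrev (hrev : ∀ η ξ, μ η * R η ξ = μ ξ * R ξ η) (hlampos : ∀ η, 0 < lam η)
    (n : ℕ) (p p' : ℕ → E) (hp : ∀ i ≤ n + 1, p' i = p (n + 1 - i)) :
    lam (p 0) * μ (p 0) * ∏ i ∈ Finset.range (n + 1), (R (p i) (p (i + 1)) / lam (p i))
      = lam (p' 0) * μ (p' 0) * ∏ i ∈ Finset.range (n + 1), (R (p' i) (p' (i + 1)) / lam (p' i)) := by
  have hnum := chainrev R μ hrev (n + 1) p p' hp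
  have hp0 : p' 0 = p (n + 1) := by simpa using hp 0 (by omega)
  have hL : ∏ i ∈ Finset.range n, lam (p' (i + 1)) = ∏ i ∈ Finset.range n, lam (p (i + 1)) := by
    rw [← Finset.prod_range_reflect (fun j => lam (p (j + 1))) n]
    refine Finset.prod_congr rfl fun i hi => ?_
    rw [Finset.mem_range] at hi
    rw [hp (i + 1) (by omega)]
    congr 2
    omega
  rw [Finset.prod_div_distrib, Finset.prod_div_distrib,
    Finset.prod_range_succ' (fun i => lam (p i)), Finset.prod_range_succ' (fun i => lam (p' i)),
    hL]
  rw [div_helper _ _ _ _ (hlampos (p 0)).ne', div_helper _ _ _ _ (hlampos (p' 0)).ne']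
  rw [← hp0] at hnum
  rw [hnum]

end rev

section rev2
variable [Countable E] [MeasurableSpace E] [MeasurableSingletonClass E]
variable (R : E → E → ℝ) (lam μ : E → ℝ)

lemma extq_rev {n : ℕ} (q : Fin (n + 2) → E) (i : ℕ) (hi : i ≤ n + 1) :
    extq (fun j => q (Fin.rev j)) i = extq q (n + 1 - i) := by
  rw [extq_of_le _ i hi, extq_of_le q _ (by omega)]
  show q (Fin.rev _) = _
  congr 1
  ext
  simp only [Fin.val_rev]
  omega

lemma Wq_eq_ofReal (hR_nonneg : ∀ η ξ, 0 ≤ R η ξ) (hlampos : ∀ η, 0 < lam η)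
    (hμpos : ∀ η, 0 < μ η) {n : ℕ} (q : Fin (n + 2) → E) :
    Wq R lam μ q = ENNReal.ofReal (lam (extq q 0) * μ (extq q 0) *
      ∏ i ∈ Finset.range (n + 1), (R (extq q i) (extq q (i + 1)) / lam (extq q i))) := by
  rw [ENNReal.ofReal_mul (mul_nonneg (hlampos _).le (hμpos _).le), ENNReal.ofReal_prod_of_nonneg
    (fun i _ => div_nonneg (hR_nonneg _ _) (hlampos _).le), Wq, extq_zero, prodW]

lemma Tn_rev (hrev : ∀ η ξ, μ η * R η ξ = μ ξ * R ξ η) (hR_nonneg : ∀ η ξ, 0 ≤ R η ξ)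
    (hlampos : ∀ η, 0 < lam η) (hμpos : ∀ η, 0 < μ η) (F X C : Set E) (n : ℕ) :
    Tn R lam μ F X C n = Tn R lam μ F C X n := by
  classical
  rw [Tn, Tn, ← Equiv.tsum_eq (Equiv.arrowCongr Fin.revPerm (Equiv.refl E))
    (fun q : Fin (n + 2) → E => if q 0 ∈ C ∧ conds F X q then Wq R lam μ q else 0)]
  refine tsum_congr fun q => ?_
  have he : ∀ i, (Equiv.arrowCongr Fin.revPerm (Equiv.refl E)) q i = q (Fin.rev i) := by
    intro i; simp [Equiv.arrowCongr]
  have hWq : Wq R lam μ ((Equiv.arrowCongr Fin.revPerm (Equiv.refl E)) q) = Wq R lam μ q := by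
    have hfun : (Equiv.arrowCongr Fin.revPerm (Equiv.refl E)) q = fun j => q (Fin.rev j) :=
      funext he
    rw [hfun, Wq_eq_ofReal R lam μ hR_nonneg hlampos hμpos,
      Wq_eq_ofReal R lam μ hR_nonneg hlampos hμpos q]
    congr 1
    exact (wrev R lam μ hrev hlampos n (extq q) (extq fun j => q (Fin.rev j))
      (fun i hi => extq_rev q i hi)).symm
  have hrev0 : Fin.rev (0 : Fin (n + 2)) = Fin.last (n + 1) := by
    ext; simp [Fin.val_rev]
  have hrevlast : Fin.rev (Fin.last (n + 1)) = (0 : Fin (n + 2)) := by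
    ext; simp [Fin.val_rev]
  have hcond : (q 0 ∈ X ∧ conds F C q) ↔
      ((Equiv.arrowCongr Fin.revPerm (Equiv.refl E)) q 0 ∈ C ∧
        conds F X ((Equiv.arrowCongr Fin.revPerm (Equiv.refl E)) q)) := by
    rw [he 0, hrev0]
    constructor
    · rintro ⟨hX, hC, hint⟩
      refine ⟨hC, ?_, ?_⟩
      · rw [he (Fin.last (n + 1)), hrevlast]; exact hX
      · intro i hi1 hi2
        rw [he i]
        exact hint (Fin.rev i) (by simp [Fin.val_rev]; omega) (by simp [Fin.val_rev]; omega)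
    · rintro ⟨hC, hX, hint⟩
      rw [he (Fin.last (n + 1)), hrevlast] at hX
      refine ⟨hX, hC, ?_⟩
      intro i hi1 hi2
      have := hint (Fin.rev i) (by simp [Fin.val_rev]; omega) (by simp [Fin.val_rev]; omega)
      rw [he (Fin.rev i), Fin.rev_rev] at this
      exact this
  by_cases h : q 0 ∈ X ∧ conds F C q
  · rw [if_pos h, if_pos (hcond.1 h), hWq]
  · rw [if_neg h, if_neg (fun hc => h (hcond.2 hc))]

end rev2

section assemble
variable [Countable E] [MeasurableSpace E] [MeasurableSingletonClass E]
variable (R : E → E → ℝ) (lam μ : E → ℝ) (ℙ : E → Measure (ℕ → E))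

noncomputable def K (F X C : Set E) : ℝ≥0∞ :=
  ∑' η, X.indicator (fun η => ENNReal.ofReal (lam η * μ η) * ℙ η (evSet F C)) η

lemma keyK (hprob : ∀ η, IsProbabilityMeasure (ℙ η))
    (hstart : ∀ η, ℙ η {ω | ω 0 = η} = 1)
    (hMarkov : ∀ (η ξ : E) (C : Set (ℕ → E)), MeasurableSet C →
      ℙ η {ω | ω 1 = ξ ∧ (fun n => ω (n + 1)) ∈ C}
        = ENNReal.ofReal (R η ξ / lam η) * ℙ ξ C)
    (F X C : Set E) (hCF : C ⊆ F) :
    K lam μ ℙ F X C = ∑' n, Tn R lam μ F X C n := by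
  have hev : ∀ η, ℙ η (evSet F C) = ∑' n, ℙ η (Dset F C n) := fun η =>
    measure_iUnion (Dset_disj F C hCF) (meas_Dset F C)
  have h1 : ∀ η, X.indicator (fun η => ENNReal.ofReal (lam η * μ η) * ℙ η (evSet F C)) η
      = ∑' n, X.indicator (fun η => ENNReal.ofReal (lam η * μ η) * ℙ η (Dset F C n)) η := by
    intro η
    by_cases hX : η ∈ X
    · rw [Set.indicator_of_mem hX, hev η, ← ENNReal.tsum_mul_left]
      exact tsum_congr fun n =>
        (Set.indicator_of_mem hX (fun η => ENNReal.ofReal (lam η * μ η) * ℙ η (Dset F C n))).symm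
    · simp [Set.indicator_of_notMem hX]
  rw [K, tsum_congr h1, ENNReal.tsum_comm]
  exact tsum_congr fun n => key_n R lam μ ℙ hprob hstart hMarkov F X C n

lemma K_add_C (F X C1 C2 : Set E) (hC1 : C1 ⊆ F) (hC2 : C2 ⊆ F) (h12 : Disjoint C1 C2) :
    K lam μ ℙ F X (C1 ∪ C2) = K lam μ ℙ F X C1 + K lam μ ℙ F X C2 := by
  rw [K, K, K, ← ENNReal.tsum_add]
  refine tsum_congr fun η => ?_
  by_cases hX : η ∈ X
  · simp only [Set.indicator_of_mem hX]
    rw [ev_union, measure_union (ev_disj F C1 C2 hC1 hC2 h12) (meas_ev F C2), mul_add]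
  · simp [Set.indicator_of_notMem hX]

lemma K_add_X (F X1 X2 C : Set E) (h12 : Disjoint X1 X2) :
    K lam μ ℙ F (X1 ∪ X2) C = K lam μ ℙ F X1 C + K lam μ ℙ F X2 C := by
  rw [K, K, K, ← ENNReal.tsum_add]
  refine tsum_congr fun η => ?_
  rw [Set.indicator_union_of_disjoint h12]

lemma K_rev (hprob : ∀ η, IsProbabilityMeasure (ℙ η))
    (hstart : ∀ η, ℙ η {ω | ω 0 = η} = 1)
    (hMarkov : ∀ (η ξ : E) (C : Set (ℕ → E)), MeasurableSet C →
      ℙ η {ω | ω 1 = ξ ∧ (fun n => ω (n + 1)) ∈ C}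
        = ENNReal.ofReal (R η ξ / lam η) * ℙ ξ C)
    (hrev : ∀ η ξ, μ η * R η ξ = μ ξ * R ξ η) (hR_nonneg : ∀ η ξ, 0 ≤ R η ξ)
    (hlampos : ∀ η, 0 < lam η) (hμpos : ∀ η, 0 < μ η)
    (F X C : Set E) (hXF : X ⊆ F) (hCF : C ⊆ F) :
    K lam μ ℙ F X C = K lam μ ℙ F C X := by
  rw [keyK R lam μ ℙ hprob hstart hMarkov F X C hCF,
    keyK R lam μ ℙ hprob hstart hMarkov F C X hXF]
  exact tsum_congr fun n => Tn_rev R lam μ hrev hR_nonneg hlampos hμpos F X C n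

lemma K_fin (hprob : ∀ η, IsProbabilityMeasure (ℙ η))
    (hlampos : ∀ η, 0 < lam η) (hμpos : ∀ η, 0 < μ η)
    (hMfin : Summable fun η => lam η * μ η) (F X C : Set E) :
    K lam μ ℙ F X C ≠ ⊤ := by
  have hle : K lam μ ℙ F X C ≤ ∑' η, ENNReal.ofReal (lam η * μ η) := by
    refine ENNReal.tsum_le_tsum fun η => ?_
    by_cases hX : η ∈ X
    · rw [Set.indicator_of_mem hX]
      haveI := hprob η
      calc ENNReal.ofReal (lam η * μ η) * ℙ η (evSet F C)
          ≤ ENNReal.ofReal (lam η * μ η) * 1 := mul_le_mul_right prob_le_one _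
        _ = ENNReal.ofReal (lam η * μ η) := mul_one _
    · rw [Set.indicator_of_notMem hX]; exact zero_le
  have : ∑' η, ENNReal.ofReal (lam η * μ η) ≠ ⊤ := by
    rw [← ENNReal.ofReal_tsum_of_nonneg (fun η => mul_nonneg (hlampos η).le (hμpos η).le) hMfin]
    exact ENNReal.ofReal_ne_top
  exact ne_top_of_le_ne_top this hle

lemma toReal_K (hlampos : ∀ η, 0 < lam η) (hμpos : ∀ η, 0 < μ η) (F X C : Set E)
    (hprob : ∀ η, IsProbabilityMeasure (ℙ η)) :
    ∑' η, X.indicator (fun η => lam η * μ η * (ℙ η (evSet F C)).toReal) η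
      = (K lam μ ℙ F X C).toReal := by
  rw [K, ENNReal.tsum_toReal_eq (fun η => ?_)]
  · refine tsum_congr fun η => ?_
    by_cases hX : η ∈ X
    · rw [Set.indicator_of_mem hX, Set.indicator_of_mem hX, ENNReal.toReal_mul,
        ENNReal.toReal_ofReal (mul_nonneg (hlampos η).le (hμpos η).le)]
    · rw [Set.indicator_of_notMem hX, Set.indicator_of_notMem hX, ENNReal.toReal_zero]
  · by_cases hX : η ∈ X
    · rw [Set.indicator_of_mem hX]
      exact ENNReal.mul_ne_top ENNReal.ofReal_ne_top (measure_ne_top _ _)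
    · rw [Set.indicator_of_notMem hX]
      exact ENNReal.zero_ne_top

end assemble

end Stmt6

end Stmt6Aux

open scoped Classical

/-- For disjoint subsets `A`, `B` of `F ⊆ E` of a positive recurrent reversible chain, the
mean set rate satisfies
`μ(A) r_F(A,B) = (1/2){Cap(A,F∖A) + Cap(B,F∖B) − Cap(A∪B, F∖(A∪B))}`. -/
theorem stmt6 {E : Type*} [Countable E] [MeasurableSpace E] [MeasurableSingletonClass E]
    (R : E → E → ℝ) (lam μ : E → ℝ) (ℙ : E → Measure (ℕ → E)) (F A B : Set E) (rF : ℝ)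
    (hAF : A ⊆ F) (hBF : B ⊆ F) (hAB : Disjoint A B)
    (hRdiag : ∀ η, R η η = 0)
    (hR_nonneg : ∀ η ξ, 0 ≤ R η ξ)
    (hRsum : ∀ η, Summable (R η))
    (hlam : ∀ η, lam η = ∑' ξ, R η ξ)
    (hlampos : ∀ η, 0 < lam η)
    (hμpos : ∀ η, 0 < μ η)
    (hμprob : ∑' η, μ η = 1)
    (hμsummable : Summable μ)
    (hrev : ∀ η ξ, μ η * R η ξ = μ ξ * R ξ η)
    (hMfin : Summable fun η => lam η * μ η)
    (hprob : ∀ η, IsProbabilityMeasure (ℙ η))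
    (hstart : ∀ η, ℙ η {ω | ω 0 = η} = 1)
    (hMarkov : ∀ (η ξ : E) (C : Set (ℕ → E)), MeasurableSet C →
      ℙ η {ω | ω 1 = ξ ∧ (fun n => ω (n + 1)) ∈ C}
        = ENNReal.ofReal (R η ξ / lam η) * ℙ ξ C)
    (hrec : ∀ η ξ, ℙ η {ω | ∃ n, 0 < n ∧ ω n = ξ} = 1)
    (hrF : rF = (∑' η, Set.indicator A μ η)⁻¹ *
      ∑' η, Set.indicator A
        (fun η => lam η * μ η * (ℙ η {ω | retT B ω < retT (F \ B) ω}).toReal) η) :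
    (∑' η, Set.indicator A μ η) * rF
      = (1 / 2) * (capSum lam μ ℙ A (F \ A) + capSum lam μ ℙ B (F \ B)
          - capSum lam μ ℙ (A ∪ B) (F \ (A ∪ B))) := by
  classical
  have hABF : A ∪ B ⊆ F := Set.union_subset hAF hBF
  -- event identifications
  have hevB : {ω : ℕ → E | retT B ω < retT (F \ B) ω} = Stmt6.evSet F B :=
    Stmt6.event_eq F B (F \ B) hBF Set.diff_subset
      (Set.disjoint_left.mpr fun x hx h2 => h2.2 hx)
      (fun x hx => by by_cases h : x ∈ B; exacts [Or.inl h, Or.inr ⟨hx, h⟩])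
  have hevFA : {ω : ℕ → E | retT (F \ A) ω < retT A ω} = Stmt6.evSet F (F \ A) :=
    Stmt6.event_eq F (F \ A) A Set.diff_subset hAF
      (Set.disjoint_left.mpr fun x hx h2 => hx.2 h2)
      (fun x hx => by by_cases h : x ∈ A; exacts [Or.inr h, Or.inl ⟨hx, h⟩])
  have hevFB : {ω : ℕ → E | retT (F \ B) ω < retT B ω} = Stmt6.evSet F (F \ B) :=
    Stmt6.event_eq F (F \ B) B Set.diff_subset hBF
      (Set.disjoint_left.mpr fun x hx h2 => hx.2 h2)
      (fun x hx => by by_cases h : x ∈ B; exacts [Or.inr h, Or.inl ⟨hx, h⟩])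
  have hevFAB : {ω : ℕ → E | retT (F \ (A ∪ B)) ω < retT (A ∪ B) ω}
      = Stmt6.evSet F (F \ (A ∪ B)) :=
    Stmt6.event_eq F (F \ (A ∪ B)) (A ∪ B) Set.diff_subset hABF
      (Set.disjoint_left.mpr fun x hx h2 => hx.2 h2)
      (fun x hx => by by_cases h : x ∈ A ∪ B; exacts [Or.inr h, Or.inl ⟨hx, h⟩])
  -- set splittings
  have hsplitA : F \ A = B ∪ (F \ (A ∪ B)) := by
    ext x
    constructor
    · rintro ⟨hF, hA⟩
      by_cases h : x ∈ B
      · exact Or.inl h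
      · exact Or.inr ⟨hF, fun hc => hc.elim hA h⟩
    · rintro (h | ⟨hF, h⟩)
      · exact ⟨hBF h, fun hc => hAB.le_bot ⟨hc, h⟩⟩
      · exact ⟨hF, fun hc => h (Or.inl hc)⟩
  have hsplitB : F \ B = A ∪ (F \ (A ∪ B)) := by
    ext x
    constructor
    · rintro ⟨hF, hB⟩
      by_cases h : x ∈ A
      · exact Or.inl h
      · exact Or.inr ⟨hF, fun hc => hc.elim h hB⟩
    · rintro (h | ⟨hF, h⟩)
      · exact ⟨hAF h, fun hc => hAB.le_bot ⟨h, hc⟩⟩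
      · exact ⟨hF, fun hc => h (Or.inr hc)⟩
  have hdisjB : Disjoint B (F \ (A ∪ B)) :=
    Set.disjoint_left.mpr fun x hx h2 => h2.2 (Or.inr hx)
  have hdisjA : Disjoint A (F \ (A ∪ B)) :=
    Set.disjoint_left.mpr fun x hx h2 => h2.2 (Or.inl hx)
  -- ENNReal-level identities
  have e1 : Stmt6.K lam μ ℙ F A (F \ A)
      = Stmt6.K lam μ ℙ F A B + Stmt6.K lam μ ℙ F A (F \ (A ∪ B)) := by
    rw [hsplitA]
    exact Stmt6.K_add_C lam μ ℙ F A B (F \ (A ∪ B)) hBF Set.diff_subset hdisjB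
  have e4 : Stmt6.K lam μ ℙ F B A = Stmt6.K lam μ ℙ F A B :=
    Stmt6.K_rev R lam μ ℙ hprob hstart hMarkov hrev hR_nonneg hlampos hμpos F B A hBF hAF
  have e2 : Stmt6.K lam μ ℙ F B (F \ B)
      = Stmt6.K lam μ ℙ F A B + Stmt6.K lam μ ℙ F B (F \ (A ∪ B)) := by
    rw [hsplitB, Stmt6.K_add_C lam μ ℙ F B A (F \ (A ∪ B)) hAF Set.diff_subset hdisjA, e4]
  have e3 : Stmt6.K lam μ ℙ F (A ∪ B) (F \ (A ∪ B))
      = Stmt6.K lam μ ℙ F A (F \ (A ∪ B)) + Stmt6.K lam μ ℙ F B (F \ (A ∪ B)) :=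
    Stmt6.K_add_X lam μ ℙ F A B (F \ (A ∪ B)) hAB
  -- finiteness
  have hfin : ∀ X C : Set E, Stmt6.K lam μ ℙ F X C ≠ ⊤ := fun X C =>
    Stmt6.K_fin lam μ ℙ hprob hlampos hμpos hMfin F X C
  -- real capacities
  have hcapA : capSum lam μ ℙ A (F \ A) = (Stmt6.K lam μ ℙ F A (F \ A)).toReal := by
    rw [capSum]
    simp only [hevFA]
    exact Stmt6.toReal_K lam μ ℙ hlampos hμpos F A (F \ A) hprob
  have hcapB : capSum lam μ ℙ B (F \ B) = (Stmt6.K lam μ ℙ F B (F \ B)).toReal := by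
    rw [capSum]
    simp only [hevFB]
    exact Stmt6.toReal_K lam μ ℙ hlampos hμpos F B (F \ B) hprob
  have hcapAB : capSum lam μ ℙ (A ∪ B) (F \ (A ∪ B))
      = (Stmt6.K lam μ ℙ F (A ∪ B) (F \ (A ∪ B))).toReal := by
    rw [capSum]
    simp only [hevFAB]
    exact Stmt6.toReal_K lam μ ℙ hlampos hμpos F (A ∪ B) (F \ (A ∪ B)) hprob
  have hS : ∑' η, Set.indicator A
        (fun η => lam η * μ η * (ℙ η {ω | retT B ω < retT (F \ B) ω}).toReal) η
      = (Stmt6.K lam μ ℙ F A B).toReal := by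
    simp only [hevB]
    exact Stmt6.toReal_K lam μ ℙ hlampos hμpos F A B hprob
  -- real splittings
  have rA : capSum lam μ ℙ A (F \ A)
      = (Stmt6.K lam μ ℙ F A B).toReal + (Stmt6.K lam μ ℙ F A (F \ (A ∪ B))).toReal := by
    rw [hcapA, e1, ENNReal.toReal_add (hfin _ _) (hfin _ _)]
  have rB : capSum lam μ ℙ B (F \ B)
      = (Stmt6.K lam μ ℙ F A B).toReal + (Stmt6.K lam μ ℙ F B (F \ (A ∪ B))).toReal := by
    rw [hcapB, e2, ENNReal.toReal_add (hfin _ _) (hfin _ _)]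
  have rAB : capSum lam μ ℙ (A ∪ B) (F \ (A ∪ B))
      = (Stmt6.K lam μ ℙ F A (F \ (A ∪ B))).toReal
        + (Stmt6.K lam μ ℙ F B (F \ (A ∪ B))).toReal := by
    rw [hcapAB, e3, ENNReal.toReal_add (hfin _ _) (hfin _ _)]
  rw [hrF, hS]
  have hts : (∑' η, Set.indicator A μ η) * ((∑' η, Set.indicator A μ η)⁻¹
      * (Stmt6.K lam μ ℙ F A B).toReal) = (Stmt6.K lam μ ℙ F A B).toReal := by
    rcases Set.eq_empty_or_nonempty A with hA | ⟨a, ha⟩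
    · have hS0 : Stmt6.K lam μ ℙ F A B = 0 := by
        rw [Stmt6.K, hA]
        simp
      rw [hS0]
      simp
    · have hsummable : Summable (A.indicator μ) := hμsummable.indicator A
      have hle : μ a ≤ ∑' η, Set.indicator A μ η := by
        have h1 := Summable.le_tsum hsummable a
          (fun b _ => Set.indicator_nonneg (fun x _ => (hμpos x).le) b)
        rwa [Set.indicator_of_mem ha] at h1
      have ht : (∑' η, Set.indicator A μ η) ≠ 0 := ne_of_gt (lt_of_lt_of_le (hμpos a) hle)
      rw [← mul_assoc, mul_inv_cancel₀ ht, one_mul]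
  rw [hts, rA, rB, rAB]
  ring
end

section
/- Let h : E → ℝ₊ be a nonnegative μ-integrable function with nonempty support F, for a positive recurrent reversible Markov chain with invariant probability μ. Let Cap_h denote the capacity of the h-time-changed (trace) process. Then for any disjoint A, B ⊆ F: ⟨h⟩_μ · Cap_h(A,B) = Cap(A,B). -/
open MeasureTheory
open scoped ENNReal

lemma retT_le {E : Type*} {A : Set E} {ω : ℕ → E} {n : ℕ} (h1 : 0 < n) (h2 : ω n ∈ A) :
    retT A ω ≤ n := iInf₂_le n ⟨h1, h2⟩

lemma retT_mono {E : Type*} {A B : Set E} (hAB : A ⊆ B) (ω : ℕ → E) :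
    retT B ω ≤ retT A ω :=
  le_iInf₂ fun n hn => retT_le hn.1 (hAB hn.2)

lemma retT_attained {E : Type*} {A : Set E} {ω : ℕ → E} (h : ∃ n, 0 < n ∧ ω n ∈ A) :
    ∃ n, 0 < n ∧ ω n ∈ A ∧ retT A ω = n := by
  classical
  refine ⟨Nat.find h, (Nat.find_spec h).1, (Nat.find_spec h).2, ?_⟩
  apply le_antisymm
  · exact retT_le (Nat.find_spec h).1 (Nat.find_spec h).2
  · exact le_iInf₂ fun n hn => by exact_mod_cast Nat.find_min' h hn

/-- Let `h : E → ℝ₊` be a nonnegative `μ`-integrable function with nonempty support `F`,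
for a positive recurrent reversible chain with invariant probability `μ`.  The capacity
`Cap_h` of the `h`-time-changed (trace) process, namely
`Cap_h(A,B) = ∑_{η∈A} μ^h(η) λ^h(η) P_η^h[τ_B⁺ < τ_A⁺]`
with `μ^h = hμ/⟨h⟩_μ`, `λ^h(η) = (lam(η)/h(η)) P_η[T_F⁺ = T_{F∖{η}}⁺]` and
`P_η^h[τ_B⁺ < τ_A⁺] = P_η[T_B⁺ < T_A⁺ | T_F⁺ = T_{F∖{η}}⁺]`, satisfies
`⟨h⟩_μ · Cap_h(A,B) = Cap(A,B)` for all disjoint `A, B ⊆ F`. -/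
theorem stmt7 {E : Type*} [Countable E] [MeasurableSpace E] [MeasurableSingletonClass E]
    (R : E → E → ℝ) (lam μ h : E → ℝ) (ℙ : E → Measure (ℕ → E))
    (F A B : Set E) (hbar capH cap : ℝ)
    (hAB : Disjoint A B) (hAF : A ⊆ F) (hBF : B ⊆ F)
    (hh_nonneg : ∀ η, 0 ≤ h η)
    (hsupp : F = {η | 0 < h η}) (hFne : F.Nonempty)
    (hhint : Summable fun η => h η * μ η)
    (hRdiag : ∀ η, R η η = 0)
    (hR_nonneg : ∀ η ξ, 0 ≤ R η ξ)
    (hRsum : ∀ η, Summable (R η))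
    (hlam : ∀ η, lam η = ∑' ξ, R η ξ)
    (hlampos : ∀ η, 0 < lam η)
    (hμpos : ∀ η, 0 < μ η)
    (hμprob : ∑' η, μ η = 1)
    (hμsummable : Summable μ)
    (hrev : ∀ η ξ, μ η * R η ξ = μ ξ * R ξ η)
    (hMfin : Summable fun η => lam η * μ η)
    (hprob : ∀ η, IsProbabilityMeasure (ℙ η))
    (hstart : ∀ η, ℙ η {ω | ω 0 = η} = 1)
    (hMarkov : ∀ (η ξ : E) (C : Set (ℕ → E)), MeasurableSet C →
      ℙ η {ω | ω 1 = ξ ∧ (fun n => ω (n + 1)) ∈ C}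
        = ENNReal.ofReal (R η ξ / lam η) * ℙ ξ C)
    (hrec : ∀ η ξ, ℙ η {ω | ∃ n, 0 < n ∧ ω n = ξ} = 1)
    (hhbar : hbar = ∑' η, h η * μ η)
    (hcapH : capH = ∑' η, Set.indicator A
      (fun η => (h η * μ η / hbar) * (lam η / h η) *
        (ℙ η {ω | retT B ω < retT A ω ∧ retT F ω = retT (F \ {η}) ω}).toReal) η)
    (hcap : cap = ∑' η, Set.indicator A
      (fun η => lam η * μ η * (ℙ η {ω | retT B ω < retT A ω}).toReal) η) :
    hbar * capH = cap := by
  have hbarpos : 0 < hbar := by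
    obtain ⟨η₀, hη₀⟩ := hFne
    rw [hsupp] at hη₀
    rw [hhbar]
    exact Summable.tsum_pos hhint (fun η => mul_nonneg (hh_nonneg η) (hμpos η).le) η₀
      (mul_pos hη₀ (hμpos η₀))
  rw [hcapH, hcap, ← tsum_mul_left]
  apply tsum_congr
  intro η
  by_cases hη : η ∈ A
  · rw [Set.indicator_of_mem hη, Set.indicator_of_mem hη]
    have hηF : 0 < h η := by
      have := hAF hη; rw [hsupp] at this; exact this
    have hBsub : B ⊆ F \ {η} := by
      intro x hx
      refine ⟨hBF hx, ?_⟩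
      simp only [Set.mem_singleton_iff]
      rintro rfl
      exact (hAB.ne_of_mem hη hx) rfl
    have hset : {ω : ℕ → E | retT B ω < retT A ω ∧ retT F ω = retT (F \ {η}) ω}
        = {ω | retT B ω < retT A ω} := by
      ext ω
      simp only [Set.mem_setOf_eq, and_iff_left_iff_imp]
      intro hlt
      refine le_antisymm (retT_mono Set.diff_subset ω) ?_
      by_contra hns
      push_neg at hns
      have hBF' : retT F ω ≤ retT B ω := retT_mono hBF ω
      have hBtop : retT B ω ≠ ⊤ := fun hB => absurd (hB ▸ hlt) (by simp)
      have hex : ∃ n, 0 < n ∧ ω n ∈ F := by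
        by_contra hc
        push_neg at hc
        have : retT F ω = ⊤ := by
          rw [retT, iInf_eq_top]
          intro n
          rw [iInf_eq_top]
          rintro ⟨h1, h2⟩
          exact absurd h2 (hc n h1)
        exact hBtop (top_le_iff.mp (this ▸ hBF'))
      obtain ⟨n₀, hn₀pos, hn₀F, hval⟩ := retT_attained hex
      by_cases hcase : ω n₀ ∈ F \ {η}
      · exact absurd (hval ▸ retT_le hn₀pos hcase) (not_le.mpr hns)
      · have hωη : ω n₀ = η := by
          by_contra hne
          exact hcase ⟨hn₀F, hne⟩
        have : retT A ω ≤ retT F ω := hval ▸ retT_le hn₀pos (hωη ▸ hη)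
        exact absurd (lt_of_le_of_lt (this.trans hBF') hlt) (lt_irrefl _)
    rw [hset]
    field_simp
  · rw [Set.indicator_of_notMem hη, Set.indicator_of_notMem hη, mul_zero]
end

section
/- Let {η_t} be an irreducible recurrent continuous-time Markov chain on countable E, with invariant measure μ (given by the occupation-time formula), and let h ≥ 0 have support F. Then the measure μ_o^h(ξ) = h(ξ)μ(ξ), ξ ∈ F, is invariant for the h-trace process η_t^h; moreover, if μ is reversible for the original chain then μ_o^h is reversible for the trace process. -/
open MeasureTheory
open scoped ENNReal
open scoped Classical

namespace Stmt8Aux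
open Filter
variable {E : Type*}

/-- taboo kernel: paths of length `n`, all points at times `1..n` outside `A`. -/
noncomputable def JJ (P : E → E → ℝ≥0∞) (A : Set E) : ℕ → E → E → ℝ≥0∞
  | 0 => fun a b => if b = a then 1 else 0
  | n+1 => fun a b => if b ∈ A then 0 else ∑' ζ, JJ P A n a ζ * P ζ b

/-- kernel of first visits to `b` at time `n+1`, avoiding `A` at times `1..n`. -/
noncomputable def ff (P : E → E → ℝ≥0∞) (A : Set E) (n : ℕ) (a b : E) : ℝ≥0∞ :=
  ∑' ζ, JJ P A n a ζ * P ζ b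

lemma JJ_succ (P : E → E → ℝ≥0∞) (A : Set E) (n : ℕ) (a b : E) :
    JJ P A (n+1) a b = if b ∈ A then 0 else ff P A n a b := rfl

lemma ff_zero (P : E → E → ℝ≥0∞) (A : Set E) (a b : E) : ff P A 0 a b = P a b := by
  rw [ff, tsum_eq_single a (fun ζ h => by simp [JJ, h])]
  simp [JJ]

lemma JJ_first (P : E → E → ℝ≥0∞) (A : Set E) :
    ∀ (n : ℕ) (a b : E), JJ P A (n+1) a b = ∑' ζ, if ζ ∈ A then 0 else P a ζ * JJ P A n ζ b := by
  intro n
  induction n with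
  | zero =>
    intro a b
    rw [JJ_succ, ff_zero]
    by_cases hb : b ∈ A
    · rw [if_pos hb]
      symm
      rw [ENNReal.tsum_eq_zero]
      intro ζ
      by_cases hζ : ζ ∈ A
      · simp [hζ]
      · simp only [if_neg hζ, JJ]
        by_cases h : b = ζ
        · exact absurd (h ▸ hb) hζ
        · simp [h]
    · rw [if_neg hb]
      rw [tsum_eq_single b (fun ζ h => by
        by_cases hζ : ζ ∈ A
        · simp [hζ]
        · simp [hζ, JJ, Ne.symm h])]
      simp [hb, JJ]
  | succ n ih =>
    intro a b
    rw [JJ_succ]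
    have expand : ∀ ζ, JJ P A (n+1) a ζ = ∑' η, if η ∈ A then 0 else P a η * JJ P A n η ζ :=
      fun ζ => ih a ζ
    by_cases hb : b ∈ A
    · rw [if_pos hb]
      symm
      rw [ENNReal.tsum_eq_zero]
      intro ζ
      by_cases hζ : ζ ∈ A
      · simp [hζ]
      · simp [hζ, JJ_succ, JJ, hb]
    · rw [if_neg hb, ff]
      calc ∑' ζ, JJ P A (n+1) a ζ * P ζ b
          = ∑' ζ, ∑' η, (if η ∈ A then 0 else P a η * JJ P A n η ζ) * P ζ b := by
            refine tsum_congr fun ζ => ?_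
            rw [expand ζ, ENNReal.tsum_mul_right]
        _ = ∑' η, ∑' ζ, (if η ∈ A then 0 else P a η * JJ P A n η ζ) * P ζ b :=
            ENNReal.tsum_comm
        _ = ∑' η, if η ∈ A then 0 else P a η * JJ P A (n+1) η b := by
            refine tsum_congr fun η => ?_
            by_cases hη : η ∈ A
            · simp [hη]
            · simp only [if_neg hη]
              rw [JJ_succ, if_neg hb, ff, ← ENNReal.tsum_mul_left]
              refine tsum_congr fun ζ => ?_
              ring

lemma ff_first (P : E → E → ℝ≥0∞) (A : Set E) (n : ℕ) (a b : E) :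
    ff P A (n+1) a b = ∑' ζ, if ζ ∈ A then 0 else P a ζ * ff P A n ζ b := by
  rw [ff]
  calc ∑' ζ, JJ P A (n+1) a ζ * P ζ b
      = ∑' ζ, ∑' η, (if η ∈ A then 0 else P a η * JJ P A n η ζ) * P ζ b := by
        refine tsum_congr fun ζ => ?_
        rw [JJ_first, ENNReal.tsum_mul_right]
    _ = ∑' η, ∑' ζ, (if η ∈ A then 0 else P a η * JJ P A n η ζ) * P ζ b :=
        ENNReal.tsum_comm
    _ = ∑' η, if η ∈ A then 0 else P a η * ff P A n η b := by
        refine tsum_congr fun η => ?_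
        by_cases hη : η ∈ A
        · simp [hη]
        · simp only [if_neg hη]
          rw [ff, ← ENNReal.tsum_mul_left]
          refine tsum_congr fun ζ => ?_
          ring

lemma JJ_mono (P : E → E → ℝ≥0∞) {A B : Set E} (hAB : A ⊆ B) :
    ∀ (n : ℕ) (a b : E), JJ P B n a b ≤ JJ P A n a b := by
  intro n
  induction n with
  | zero => intro a b; simp [JJ]
  | succ n ih =>
    intro a b
    rw [JJ_succ, JJ_succ]
    by_cases hb : b ∈ A
    · simp [hb, hAB hb]
    · rw [if_neg hb]
      by_cases hb' : b ∈ B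
      · simp [hb']
      · rw [if_neg hb']
        exact ENNReal.tsum_le_tsum fun ζ => mul_le_mul_left (ih a ζ) _

lemma ff_mono (P : E → E → ℝ≥0∞) {A B : Set E} (hAB : A ⊆ B) (n : ℕ) (a b : E) :
    ff P B n a b ≤ ff P A n a b :=
  ENNReal.tsum_le_tsum fun ζ => mul_le_mul_left (JJ_mono P hAB n a ζ) _

lemma ff_symm (P : E → E → ℝ≥0∞) (ν : E → ℝ≥0∞) (A : Set E)
    (hdb : ∀ a b, ν a * P a b = ν b * P b a) :
    ∀ (n : ℕ) (a b : E), ν a * ff P A n a b = ν b * ff P A n b a := by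
  intro n
  induction n with
  | zero => intro a b; rw [ff_zero, ff_zero]; exact hdb a b
  | succ n ih =>
    intro a b
    rw [ff_first]
    calc ν a * ∑' ζ, (if ζ ∈ A then 0 else P a ζ * ff P A n ζ b)
        = ∑' ζ, if ζ ∈ A then 0 else (ν a * P a ζ) * ff P A n ζ b := by
          rw [← ENNReal.tsum_mul_left]
          refine tsum_congr fun ζ => ?_
          by_cases hζ : ζ ∈ A <;> simp [hζ, mul_assoc]
      _ = ∑' ζ, if ζ ∈ A then 0 else P ζ a * (ν ζ * ff P A n ζ b) := by
          refine tsum_congr fun ζ => ?_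
          by_cases hζ : ζ ∈ A
          · simp [hζ]
          · simp only [if_neg hζ, hdb a ζ]; ring
      _ = ∑' ζ, if ζ ∈ A then 0 else P ζ a * (ν b * ff P A n b ζ) := by
          refine tsum_congr fun ζ => ?_
          by_cases hζ : ζ ∈ A
          · simp [hζ]
          · simp only [if_neg hζ, ih ζ b]
      _ = ν b * ∑' ζ, (if ζ ∈ A then 0 else ff P A n b ζ * P ζ a) := by
          rw [← ENNReal.tsum_mul_left]
          refine tsum_congr fun ζ => ?_
          by_cases hζ : ζ ∈ A
          · simp [hζ]
          · simp [hζ]; ring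
      _ = ν b * ff P A (n+1) b a := by
          congr 1
          rw [ff]
          refine tsum_congr fun ζ => ?_
          rw [JJ_succ]
          by_cases hζ : ζ ∈ A <;> simp [hζ]

/-- one step of the invariant-mass decomposition -/
lemma qstep (P : E → E → ℝ≥0∞) (ν : E → ℝ≥0∞) (A : Set E)
    (hinv : ∀ b, ∑' a, ν a * P a b = ν b) (b : E) (N : ℕ) :
    (∑' η, if η ∈ A then 0 else ν η * ff P A N η b)
      = (∑' η, if η ∈ A then ν η * ff P A (N+1) η b else 0)
        + ∑' η, if η ∈ A then 0 else ν η * ff P A (N+1) η b := by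
  have rho : ∀ ζ, (∑' η, if η ∈ A then 0 else ν η * JJ P A N η ζ)
      = ∑' a, ν a * JJ P A (N+1) a ζ := by
    intro ζ
    calc (∑' η, if η ∈ A then 0 else ν η * JJ P A N η ζ)
        = ∑' η, if η ∈ A then 0 else (∑' a, ν a * P a η) * JJ P A N η ζ := by
          refine tsum_congr fun η => ?_; rw [hinv η]
      _ = ∑' η, ∑' a, ν a * (if η ∈ A then 0 else P a η * JJ P A N η ζ) := by
          refine tsum_congr fun η => ?_
          by_cases hη : η ∈ A
          · simp [hη]
          · simp only [if_neg hη, ENNReal.tsum_mul_right, ← mul_assoc]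
      _ = ∑' a, ∑' η, ν a * (if η ∈ A then 0 else P a η * JJ P A N η ζ) :=
          ENNReal.tsum_comm
      _ = ∑' a, ν a * JJ P A (N+1) a ζ := by
          refine tsum_congr fun a => ?_
          rw [ENNReal.tsum_mul_left, JJ_first]
  have hq : ∀ (f : E → E → ℝ≥0∞),
      (∑' η, if η ∈ A then 0 else ν η * (∑' ζ, f η ζ * P ζ b))
        = ∑' ζ, (∑' η, if η ∈ A then 0 else ν η * f η ζ) * P ζ b := by
    intro f
    calc (∑' η, if η ∈ A then 0 else ν η * (∑' ζ, f η ζ * P ζ b))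
        = ∑' η, ∑' ζ, (if η ∈ A then 0 else ν η * f η ζ) * P ζ b := by
          refine tsum_congr fun η => ?_
          by_cases hη : η ∈ A
          · simp [hη]
          · simp only [if_neg hη, ← ENNReal.tsum_mul_left]
            refine tsum_congr fun ζ => ?_; ring
      _ = ∑' ζ, ∑' η, (if η ∈ A then 0 else ν η * f η ζ) * P ζ b := ENNReal.tsum_comm
      _ = ∑' ζ, (∑' η, if η ∈ A then 0 else ν η * f η ζ) * P ζ b := by
          refine tsum_congr fun ζ => ?_; rw [ENNReal.tsum_mul_right]
  have hS : ∀ (f : E → E → ℝ≥0∞),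
      (∑' η, if η ∈ A then ν η * (∑' ζ, f η ζ * P ζ b) else 0)
        = ∑' ζ, (∑' η, if η ∈ A then ν η * f η ζ else 0) * P ζ b := by
    intro f
    calc (∑' η, if η ∈ A then ν η * (∑' ζ, f η ζ * P ζ b) else 0)
        = ∑' η, ∑' ζ, (if η ∈ A then ν η * f η ζ else 0) * P ζ b := by
          refine tsum_congr fun η => ?_
          by_cases hη : η ∈ A
          · simp only [if_pos hη, ← ENNReal.tsum_mul_left]
            refine tsum_congr fun ζ => ?_; ring
          · simp [hη]
      _ = ∑' ζ, ∑' η, (if η ∈ A then ν η * f η ζ else 0) * P ζ b := ENNReal.tsum_comm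
      _ = ∑' ζ, (∑' η, if η ∈ A then ν η * f η ζ else 0) * P ζ b := by
          refine tsum_congr fun ζ => ?_; rw [ENNReal.tsum_mul_right]
  have lhs : (∑' η, if η ∈ A then 0 else ν η * ff P A N η b)
      = ∑' ζ, (∑' a, ν a * JJ P A (N+1) a ζ) * P ζ b := by
    rw [show (fun η => if η ∈ A then 0 else ν η * ff P A N η b)
        = fun η => if η ∈ A then 0 else ν η * (∑' ζ, JJ P A N η ζ * P ζ b) from rfl]
    rw [hq (fun η ζ => JJ P A N η ζ)]
    exact tsum_congr fun ζ => by rw [rho ζ]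
  have split : ∀ ζ, (∑' a, ν a * JJ P A (N+1) a ζ)
      = (∑' a, if a ∈ A then ν a * JJ P A (N+1) a ζ else 0)
        + ∑' a, if a ∈ A then 0 else ν a * JJ P A (N+1) a ζ := by
    intro ζ
    rw [← ENNReal.tsum_add]
    refine tsum_congr fun a => ?_
    by_cases ha : a ∈ A <;> simp [ha]
  rw [lhs]
  calc ∑' ζ, (∑' a, ν a * JJ P A (N+1) a ζ) * P ζ b
      = ∑' ζ, ((∑' a, if a ∈ A then ν a * JJ P A (N+1) a ζ else 0) * P ζ b
          + (∑' a, if a ∈ A then 0 else ν a * JJ P A (N+1) a ζ) * P ζ b) := by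
        refine tsum_congr fun ζ => ?_
        rw [split ζ, add_mul]
    _ = (∑' ζ, (∑' a, if a ∈ A then ν a * JJ P A (N+1) a ζ else 0) * P ζ b)
          + ∑' ζ, (∑' a, if a ∈ A then 0 else ν a * JJ P A (N+1) a ζ) * P ζ b :=
        ENNReal.tsum_add
    _ = _ := by
        rw [← hS (fun η ζ => JJ P A (N+1) η ζ), ← hq (fun η ζ => JJ P A (N+1) η ζ)]
        rfl

lemma decomp (P : E → E → ℝ≥0∞) (ν : E → ℝ≥0∞) (A : Set E)
    (hinv : ∀ b, ∑' a, ν a * P a b = ν b) (b : E) :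
    ∀ N : ℕ, ν b = (∑ m ∈ Finset.range (N+1), ∑' η, if η ∈ A then ν η * ff P A m η b else 0)
        + ∑' η, if η ∈ A then 0 else ν η * ff P A N η b := by
  intro N
  induction N with
  | zero =>
    simp only [Nat.zero_add, Finset.range_one, Finset.sum_singleton]
    rw [← hinv b]
    rw [← ENNReal.tsum_add]
    refine tsum_congr fun a => ?_
    rw [ff_zero]
    by_cases ha : a ∈ A
    · rw [if_pos ha, if_pos ha]; exact (add_zero _).symm
    · rw [if_neg ha, if_neg ha]; exact (zero_add _).symm
  | succ N ih =>
    rw [Finset.sum_range_succ, add_assoc, ← qstep P ν A hinv b N]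
    exact ih

lemma retT_le {A : Set E} {ω : ℕ → E} {n : ℕ} (h0 : 0 < n) (h : ω n ∈ A) :
    retT A ω ≤ (n : ℕ∞) :=
  iInf_le_of_le n (iInf_le_of_le ⟨h0, h⟩ le_rfl)

lemma retT_eq {A : Set E} {ω : ℕ → E} {n : ℕ} (h0 : 0 < n) (h : ω n ∈ A)
    (hmin : ∀ k, 0 < k → k < n → ω k ∉ A) : retT A ω = (n : ℕ∞) := by
  refine le_antisymm (retT_le h0 h) ?_
  refine le_iInf fun m => le_iInf fun hm => ?_
  have : n ≤ m := by
    by_contra h'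
    exact hmin m hm.1 (by omega) hm.2
  exact_mod_cast this

lemma retT_min {A : Set E} {ω : ℕ → E} {n k : ℕ} (hr : retT A ω = (n : ℕ∞))
    (h0 : 0 < k) (hk : k < n) : ω k ∉ A := by
  intro hmem
  have hle := retT_le h0 hmem
  rw [hr] at hle
  have : n ≤ k := by exact_mod_cast hle
  omega

/-- first-visit event: at time `n+1` we are at `b`, and times `1..n` avoid `A`. -/
def Evf (A : Set E) (n : ℕ) (b : E) : Set (ℕ → E) :=
  {ω | ω (n+1) = b ∧ ∀ k, 1 ≤ k → k ≤ n → ω k ∉ A}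

lemma Evf_disj_aux {A : Set E} {n m : ℕ} {b c : E} (hnm : n < m) (hb : b ∈ A) :
    Disjoint (Evf A n b) (Evf A m c) := by
  refine Set.disjoint_left.2 fun ω h h' => ?_
  have : ω (n+1) ∉ A := h'.2 (n+1) (by omega) (by omega)
  rw [h.1] at this
  exact this hb

lemma Evf_subset_ret {F : Set E} {ξ : E} (hξ : ξ ∈ F) (n : ℕ) :
    Evf F n ξ ⊆ {ω | retT F ω = retT {ξ} ω} := by
  rintro ω ⟨hb, hk⟩
  have h1 : retT F ω = ((n+1 : ℕ) : ℕ∞) :=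
    retT_eq (by omega) (hb ▸ hξ) (fun k hk0 hkn => hk k (by omega) (by omega))
  have h2 : retT {ξ} ω = ((n+1 : ℕ) : ℕ∞) := by
    refine retT_eq (by omega) (by rw [hb]; rfl) (fun k hk0 hkn hmem => ?_)
    have : ω k ∈ F := by rwa [Set.mem_singleton_iff.1 hmem]
    exact hk k (by omega) (by omega) this
  simp only [Set.mem_setOf_eq, h1, h2]

lemma ret_subset {F : Set E} {ξ : E} :
    {ω : ℕ → E | retT F ω = retT {ξ} ω} ∩ {ω | ∃ n, 0 < n ∧ ω n = ξ} ⊆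
      ⋃ n, Evf F n ξ := by
  rintro ω ⟨hret, hex⟩
  have hex' : ∃ n, 0 < n ∧ ω n ∈ ({ξ} : Set E) := by
    obtain ⟨n, hn, he⟩ := hex; exact ⟨n, hn, by rw [he]; rfl⟩
  obtain ⟨hm0, hmξ⟩ := Nat.find_spec hex'
  set m := Nat.find hex' with hm
  have hminξ : ∀ k, 0 < k → k < m → ω k ∉ ({ξ} : Set E) := fun k hk0 hkm hmem =>
    Nat.find_min hex' hkm ⟨hk0, hmem⟩
  have h2 : retT {ξ} ω = (m : ℕ∞) := retT_eq hm0 hmξ hminξ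
  have h1 : retT F ω = (m : ℕ∞) := by rw [Set.mem_setOf_eq] at hret; rw [hret, h2]
  refine Set.mem_iUnion.2 ⟨m - 1, ?_, ?_⟩
  · have hm1 : m - 1 + 1 = m := by omega
    rw [hm1]
    exact Set.mem_singleton_iff.1 hmξ
  · intro k hk1 hk2
    exact retT_min h1 (by omega) (by omega)

lemma tot_union (A : Set E) :
    (⋃ q : E × ℕ, if q.1 ∈ A then Evf A q.2 q.1 else ∅)
      = {ω : ℕ → E | ∃ k, 0 < k ∧ ω k ∈ A} := by
  ext ω
  simp only [Set.mem_iUnion, Set.mem_setOf_eq]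
  constructor
  · rintro ⟨⟨b, n⟩, hmem⟩
    by_cases hb : b ∈ A
    · rw [if_pos hb] at hmem
      exact ⟨n+1, by omega, hmem.1 ▸ hb⟩
    · rw [if_neg hb] at hmem; exact absurd hmem (Set.notMem_empty _)
  · intro hex
    obtain ⟨hm0, hmA⟩ := Nat.find_spec hex
    set m := Nat.find hex with hm
    refine ⟨(ω m, m - 1), ?_⟩
    rw [if_pos hmA]
    have hm1 : m - 1 + 1 = m := by omega
    refine ⟨by rw [hm1], fun k hk1 hk2 hk3 => ?_⟩
    exact Nat.find_min hex (by omega) ⟨by omega, hk3⟩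

lemma tot_pair_disj (A : Set E) :
    Pairwise (Function.onFun Disjoint
      (fun q : E × ℕ => if q.1 ∈ A then Evf A q.2 q.1 else ∅)) := by
  rintro ⟨b, n⟩ ⟨c, m⟩ hne
  unfold Function.onFun
  dsimp only
  by_cases hb : b ∈ A
  · by_cases hc : c ∈ A
    · rw [if_pos hb, if_pos hc]
      rcases lt_trichotomy n m with h | h | h
      · exact Evf_disj_aux h hb
      · subst h
        have hbc : b ≠ c := fun he => hne (by rw [he])
        refine Set.disjoint_left.2 fun ω h1 h2 => hbc ?_
        rw [← h1.1, ← h2.1]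
      · exact (Evf_disj_aux h hc).symm
    · rw [if_neg hc]; exact disjoint_bot_right
  · rw [if_neg hb]; exact disjoint_bot_left

section meas
variable [Countable E] [MeasurableSpace E] [MeasurableSingletonClass E]

lemma meas_all (s : Set E) : MeasurableSet s := (Set.to_countable s).measurableSet

lemma meas_coord (k : ℕ) (s : Set E) : MeasurableSet {ω : ℕ → E | ω k ∈ s} :=
  (measurable_pi_apply k) (meas_all s)

lemma meas_Evf (A : Set E) (n : ℕ) (b : E) : MeasurableSet (Evf A n b) := by
  have : Evf A n b = {ω : ℕ → E | ω (n+1) ∈ ({b} : Set E)}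
      ∩ ⋂ (k : ℕ) (_ : 1 ≤ k ∧ k ≤ n), {ω : ℕ → E | ω k ∈ Aᶜ} := by
    ext ω
    constructor
    · rintro ⟨hb, hk⟩
      exact ⟨hb, Set.mem_iInter.2 fun k => Set.mem_iInter.2 fun hk' => hk k hk'.1 hk'.2⟩
    · rintro ⟨hb, hk⟩
      exact ⟨hb, fun k h1 h2 => Set.mem_iInter.1 (Set.mem_iInter.1 hk k) ⟨h1, h2⟩⟩
  rw [this]
  exact (meas_coord _ _).inter
    (MeasurableSet.iInter fun k => MeasurableSet.iInter fun _ => meas_coord _ _)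

lemma meas_cyl (ζ : E) (C : Set (ℕ → E)) (hC : MeasurableSet C) :
    MeasurableSet {ω : ℕ → E | ω 1 = ζ ∧ (fun n => ω (n + 1)) ∈ C} := by
  have hshift : Measurable (fun (ω : ℕ → E) (n : ℕ) => ω (n+1)) :=
    measurable_pi_lambda _ fun n => measurable_pi_apply (n+1)
  exact (meas_coord 1 {ζ}).inter (hshift hC)

lemma meas_hit (A : Set E) : MeasurableSet {ω : ℕ → E | ∃ k, 0 < k ∧ ω k ∈ A} := by
  have : {ω : ℕ → E | ∃ k, 0 < k ∧ ω k ∈ A}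
      = ⋃ (k : ℕ) (_ : 0 < k), {ω : ℕ → E | ω k ∈ A} := by
    ext ω; simp
  rw [this]
  exact MeasurableSet.iUnion fun k => MeasurableSet.iUnion fun _ => meas_coord _ _

variable (ℙ : E → Measure (ℕ → E)) (P : E → E → ℝ≥0∞)
  (hprob : ∀ a, IsProbabilityMeasure (ℙ a))
  (hM : ∀ (a b : E) (C : Set (ℕ → E)), MeasurableSet C →
    ℙ a {ω | ω 1 = b ∧ (fun n => ω (n + 1)) ∈ C} = P a b * ℙ b C)

include hprob hM in
lemma P_ff (A : Set E) : ∀ (n : ℕ) (a b : E), ℙ a (Evf A n b) = ff P A n a b := by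
  intro n
  induction n with
  | zero =>
    intro a b
    have : Evf A 0 b = {ω : ℕ → E | ω 1 = b ∧ (fun n => ω (n + 1)) ∈ Set.univ} := by
      ext ω; simp [Evf]; omega
    rw [this, hM a b Set.univ MeasurableSet.univ, ff_zero]
    have := hprob b
    simp
  | succ n ih =>
    intro a b
    have hun : Evf A (n+1) b = ⋃ ζ, {ω : ℕ → E | ω 1 = ζ ∧
        (fun k => ω (k + 1)) ∈ (if ζ ∈ A then (∅ : Set (ℕ → E)) else Evf A n b)} := by
      ext ω
      simp only [Set.mem_iUnion, Set.mem_setOf_eq, Evf]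
      constructor
      · rintro ⟨hb, hk⟩
        refine ⟨ω 1, rfl, ?_⟩
        have h1 : ω 1 ∉ A := hk 1 le_rfl (by omega)
        rw [if_neg h1]
        exact ⟨hb, fun k hk1 hk2 => hk (k+1) (by omega) (by omega)⟩
      · rintro ⟨ζ, h1, h2⟩
        by_cases hζ : ζ ∈ A
        · rw [if_pos hζ] at h2; exact absurd h2 (Set.notMem_empty _)
        · rw [if_neg hζ] at h2
          obtain ⟨hb, hk⟩ := h2
          refine ⟨hb, fun k hk1 hk2 => ?_⟩
          rcases k with _ | k
          · omega
          · rcases Nat.eq_zero_or_pos k with hk0 | hk0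
            · subst hk0; rw [show (0:ℕ)+1 = 1 from rfl, h1]; exact hζ
            · exact hk k hk0 (by omega)
    rw [hun, measure_iUnion ?_ ?_]
    · rw [ff_first]
      refine tsum_congr fun ζ => ?_
      by_cases hζ : ζ ∈ A
      · rw [if_pos hζ, hM a ζ ∅ MeasurableSet.empty, if_pos hζ]
        simp
      · rw [if_neg hζ, hM a ζ (Evf A n b) (meas_Evf A n b), ih ζ b, if_neg hζ]
    · intro ζ ζ' hne
      refine Set.disjoint_left.2 fun ω h h' => hne ?_
      rw [← h.1, ← h'.1]
    · intro ζ
      refine meas_cyl _ _ ?_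
      by_cases hζ : ζ ∈ A
      · rw [if_pos hζ]; exact MeasurableSet.empty
      · rw [if_neg hζ]; exact meas_Evf A n b

include hprob hM in
lemma P_U {A : Set E} {ξ : E} (hξ : ξ ∈ A) (a : E) :
    ℙ a (⋃ n, Evf A n ξ) = ∑' n, ff P A n a ξ := by
  rw [measure_iUnion ?_ (fun n => meas_Evf A n ξ)]
  · exact tsum_congr fun n => P_ff ℙ P hprob hM A n a ξ
  · intro n m hne
    rcases lt_trichotomy n m with h | h | h
    · exact Evf_disj_aux h hξ
    · exact absurd h hne
    · exact (Evf_disj_aux h hξ).symm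

include hprob hM in
lemma P_tot {A : Set E} {ξ0 : E} (hξ0 : ξ0 ∈ A)
    (hrec : ∀ a b, ℙ a {ω | ∃ n, 0 < n ∧ ω n = b} = 1) (a : E) :
    (∑' b, if b ∈ A then ∑' n, ff P A n a b else 0) = 1 := by
  have hmeas : ∀ q : E × ℕ,
      MeasurableSet (if q.1 ∈ A then Evf A q.2 q.1 else ∅) := by
    rintro ⟨b, n⟩
    dsimp only
    by_cases hb : b ∈ A
    · rw [if_pos hb]; exact meas_Evf A n b
    · rw [if_neg hb]; exact MeasurableSet.empty
  have hU := measure_iUnion (μ := ℙ a) (tot_pair_disj A) hmeas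
  rw [tot_union] at hU
  have h1 : ℙ a {ω : ℕ → E | ∃ k, 0 < k ∧ ω k ∈ A} = 1 := by
    haveI := hprob a
    refine le_antisymm prob_le_one ?_
    rw [← hrec a ξ0]
    refine measure_mono fun ω => ?_
    rintro ⟨n, hn, he⟩
    exact ⟨n, hn, he ▸ hξ0⟩
  rw [h1] at hU
  rw [ENNReal.tsum_prod'] at hU
  dsimp only at hU
  refine Eq.trans ?_ hU.symm
  refine tsum_congr fun b => ?_
  by_cases hb : b ∈ A
  · rw [if_pos hb]
    refine tsum_congr fun n => ?_
    rw [if_pos hb]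
    exact (P_ff ℙ P hprob hM A n a b).symm
  · simp [hb]

include hprob hM in
lemma P_ret {F : Set E} {ξ : E} (hξ : ξ ∈ F)
    (hrec : ∀ a b, ℙ a {ω | ∃ n, 0 < n ∧ ω n = b} = 1) (a : E) :
    ℙ a {ω | retT F ω = retT {ξ} ω} = ∑' n, ff P F n a ξ := by
  haveI := hprob a
  have hGmeas : MeasurableSet {ω : ℕ → E | ∃ n, 0 < n ∧ ω n = ξ} := by
    have : {ω : ℕ → E | ∃ n, 0 < n ∧ ω n = ξ} = {ω : ℕ → E | ∃ n, 0 < n ∧ ω n ∈ ({ξ} : Set E)} := by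
      ext ω; simp
    rw [this]; exact meas_hit _
  have hGc : ℙ a {ω : ℕ → E | ∃ n, 0 < n ∧ ω n = ξ}ᶜ = 0 := by
    rw [measure_compl hGmeas (measure_ne_top _ _), measure_univ, hrec a ξ, tsub_self]
  rw [← P_U ℙ P hprob hM hξ a]
  refine le_antisymm ?_ (measure_mono (Set.iUnion_subset fun n => Evf_subset_ret hξ n))
  calc ℙ a {ω | retT F ω = retT {ξ} ω}
      ≤ ℙ a ((⋃ n, Evf F n ξ) ∪ {ω : ℕ → E | ∃ n, 0 < n ∧ ω n = ξ}ᶜ) := by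
        refine measure_mono fun ω hω => ?_
        by_cases hG : ω ∈ {ω : ℕ → E | ∃ n, 0 < n ∧ ω n = ξ}
        · exact Or.inl (ret_subset ⟨hω, hG⟩)
        · exact Or.inr hG
    _ ≤ ℙ a (⋃ n, Evf F n ξ) + ℙ a {ω : ℕ → E | ∃ n, 0 < n ∧ ω n = ξ}ᶜ :=
        measure_union_le _ _
    _ = ℙ a (⋃ n, Evf F n ξ) := by rw [hGc, add_zero]

end meas
end Stmt8Aux

/-- Let `{η_t}` be an irreducible recurrent continuous-time Markov chain on countable `E`,
with invariant measure `μ`, and let `h ≥ 0` have support `F`.  Then the measure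
`μ_o^h(ξ) = h(ξ)μ(ξ)`, `ξ ∈ F`, is invariant for the `h`-trace process, whose rates are
`R^h(η,ξ) = (lam(η)/h(η)) P_η[T_F⁺ = T_ξ⁺]` (balance equations on `F`); moreover, if `μ` is
reversible for the original chain then `μ_o^h` is reversible for the trace process.
`ℙ` denotes the family of laws of the jump chain, with jump probabilities `R(η,ξ)/lam(η)`. -/
theorem stmt8 {E : Type*} [Countable E] [MeasurableSpace E] [MeasurableSingletonClass E]
    (R : E → E → ℝ) (lam μ h : E → ℝ) (ℙ : E → Measure (ℕ → E))
    (F : Set E) (Rh : E → E → ℝ)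
    (hh_nonneg : ∀ η, 0 ≤ h η)
    (hsupp : F = {η | 0 < h η}) (hFne : F.Nonempty)
    (hRdiag : ∀ η, R η η = 0)
    (hR_nonneg : ∀ η ξ, 0 ≤ R η ξ)
    (hRsum : ∀ η, Summable (R η))
    (hlam : ∀ η, lam η = ∑' ξ, R η ξ)
    (hlampos : ∀ η, 0 < lam η)
    (hμpos : ∀ η, 0 < μ η)
    (hinv : ∀ ξ, ∑' η, (if η = ξ then 0 else μ η * R η ξ) = μ ξ * lam ξ)
    (hprob : ∀ η, IsProbabilityMeasure (ℙ η))
    (hstart : ∀ η, ℙ η {ω | ω 0 = η} = 1)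
    (hMarkov : ∀ (η ξ : E) (C : Set (ℕ → E)), MeasurableSet C →
      ℙ η {ω | ω 1 = ξ ∧ (fun n => ω (n + 1)) ∈ C}
        = ENNReal.ofReal (R η ξ / lam η) * ℙ ξ C)
    (hrec : ∀ η ξ, ℙ η {ω | ∃ n, 0 < n ∧ ω n = ξ} = 1)
    (hRh : ∀ η ξ, η ≠ ξ →
      Rh η ξ = (lam η / h η) * (ℙ η {ω | retT F ω = retT {ξ} ω}).toReal)
    (hRhdiag : ∀ η, Rh η η = 0) :
    (∀ ξ ∈ F, ∑' η, (if η ∈ F ∧ η ≠ ξ then h η * μ η * Rh η ξ else 0)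
        = h ξ * μ ξ * ∑' η, (if η ∈ F ∧ η ≠ ξ then Rh ξ η else 0))
    ∧ ((∀ η ξ, μ η * R η ξ = μ ξ * R ξ η) →
        ∀ η ∈ F, ∀ ξ ∈ F, h η * μ η * Rh η ξ = h ξ * μ ξ * Rh ξ η) := by
  classical
  open Stmt8Aux Filter in
  -- jump kernel and invariant weights, in `ℝ≥0∞`
  set P : E → E → ℝ≥0∞ := fun a b => ENNReal.ofReal (R a b / lam a) with hP
  set ν : E → ℝ≥0∞ := fun a => ENNReal.ofReal (μ a * lam a) with hν
  have hM' : ∀ (a b : E) (C : Set (ℕ → E)), MeasurableSet C →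
      ℙ a {ω | ω 1 = b ∧ (fun n => ω (n + 1)) ∈ C} = P a b * ℙ b C := by
    intro a b C mC
    rw [hP]
    exact hMarkov a b C mC
  have νne : ∀ a, ν a ≠ ⊤ := fun a => ENNReal.ofReal_ne_top
  have νtoReal : ∀ a, (ν a).toReal = μ a * lam a := fun a =>
    ENNReal.toReal_ofReal (by have := (hμpos a).le; have := (hlampos a).le; positivity)
  -- the pointwise identity ν a * P a b = ofReal (μ a * R a b)
  have hνP : ∀ a b, ν a * P a b = ENNReal.ofReal (μ a * R a b) := by
    intro a b
    rw [hν, hP]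
    dsimp only
    rw [← ENNReal.ofReal_mul (by have := (hμpos a).le; have := (hlampos a).le; positivity)]
    congr 1
    have hla : lam a ≠ 0 := (hlampos a).ne'
    field_simp
  -- invariance of ν in ℝ≥0∞
  have hinvE : ∀ b, ∑' a, ν a * P a b = ν b := by
    intro b
    have hfun : (fun η => if η = b then 0 else μ η * R η b) = fun η => μ η * R η b := by
      funext η
      by_cases hη : η = b
      · subst hη; simp [hRdiag]
      · simp [hη]
    have hsum0 : ∑' η, μ η * R η b = μ b * lam b := by
      have := hinv b; rwa [hfun] at this
    have hsumm : Summable (fun η => μ η * R η b) := by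
      by_contra hns
      rw [tsum_eq_zero_of_not_summable hns] at hsum0
      nlinarith [hμpos b, hlampos b]
    calc ∑' a, ν a * P a b = ∑' a, ENNReal.ofReal (μ a * R a b) :=
          tsum_congr fun a => hνP a b
      _ = ENNReal.ofReal (∑' a, μ a * R a b) :=
          (ENNReal.ofReal_tsum_of_nonneg
            (fun a => by have := (hμpos a).le; have := hR_nonneg a b; positivity) hsumm).symm
      _ = ν b := by rw [hsum0, hν]
  -- the first-return distribution
  set pp : Set E → E → E → ℝ≥0∞ := fun A a b => ∑' n, ff P A n a b with hpp
  have P_ret' : ∀ {ξ : E}, ξ ∈ F → ∀ a : E,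
      ℙ a {ω | retT F ω = retT {ξ} ω} = pp F a ξ := fun hξ a =>
    P_ret ℙ P hprob hM' hξ hrec a
  have pp_le_one : ∀ {ξ : E}, ξ ∈ F → ∀ a, pp F a ξ ≤ 1 := by
    intro ξ hξ a
    rw [← P_ret' hξ a]
    haveI := hprob a
    exact prob_le_one
  have pp_ne_top : ∀ {ξ : E}, ξ ∈ F → ∀ a, pp F a ξ ≠ ⊤ :=
    fun hξ a => ne_top_of_le_ne_top ENNReal.one_ne_top (pp_le_one hξ a)
  -- positivity of h on F
  have hpos : ∀ {η : E}, η ∈ F → 0 < h η := by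
    intro η hη
    rw [hsupp] at hη
    exact hη
  constructor
  · -- invariance of h·μ for the trace chain
    intro ξ hξ
    -- KEY 1 : ∑_{η ∈ F} ν η · pp F η ξ = ν ξ
    have key1 : (∑' η, if η ∈ F then ν η * pp F η ξ else 0) = ν ξ := by
      -- partial sums from `decomp` with taboo set F
      have hdec := decomp P ν F hinvE ξ
      -- decomposition with taboo set {ξ}
      have hdec' := decomp P ν ({ξ} : Set E) hinvE ξ
      set S : ℕ → ℝ≥0∞ := fun m => ∑' η, if η ∈ F then ν η * ff P F m η ξ else 0 with hS
      set q : ℕ → ℝ≥0∞ := fun N => ∑' η, if η ∈ F then 0 else ν η * ff P F N η ξ with hq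
      set q' : ℕ → ℝ≥0∞ :=
        fun N => ∑' η, if η ∈ ({ξ} : Set E) then 0 else ν η * ff P ({ξ} : Set E) N η ξ with hq'
      set s' : ℕ → ℝ≥0∞ := fun N => ∑ m ∈ Finset.range (N+1), ff P ({ξ} : Set E) m ξ ξ with hs'
      have hsingle : ∀ m, (∑' η, if η ∈ ({ξ} : Set E) then ν η * ff P ({ξ} : Set E) m η ξ else 0)
          = ν ξ * ff P ({ξ} : Set E) m ξ ξ := by
        intro m
        rw [tsum_eq_single ξ (fun η hη => by
          rw [if_neg]
          simpa using hη)]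
        rw [if_pos (Set.mem_singleton _)]
      have hdec'' : ∀ N, ν ξ = ν ξ * s' N + q' N := by
        intro N
        have := hdec' N
        erw [Finset.sum_congr rfl (fun m _ => hsingle m)] at this
        rw [← Finset.mul_sum] at this
        exact this
      -- ∑' over all first-return times at ξ with taboo {ξ} is 1
      have hfret : (∑' n, ff P ({ξ} : Set E) n ξ ξ) = 1 := by
        have htot := P_tot ℙ P hprob hM' (A := ({ξ} : Set E)) rfl hrec ξ
        rw [tsum_eq_single ξ (fun b hb => by rw [if_neg (by simpa using hb)])] at htot
        rw [if_pos (Set.mem_singleton _)] at htot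
        exact htot
      -- q' N → 0
      have hs'le : ∀ N, s' N ≤ 1 := by
        intro N
        rw [hs', ← hfret]
        exact ENNReal.sum_le_tsum _
      have hs'tend : Tendsto (fun N => ν ξ * s' N) atTop (nhds (ν ξ)) := by
        have h1 : Tendsto s' atTop (nhds 1) := by
          rw [← hfret]
          exact (ENNReal.tendsto_nat_tsum _).comp (tendsto_add_atTop_nat 1)
        have := ENNReal.Tendsto.const_mul (a := ν ξ) h1 (Or.inr (νne ξ))
        simpa using this
      have hq'eq : ∀ N, q' N = ν ξ - ν ξ * s' N := by
        intro N
        refine ENNReal.eq_sub_of_add_eq ?_ ?_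
        · exact ENNReal.mul_ne_top (νne ξ) (ne_top_of_le_ne_top ENNReal.one_ne_top (hs'le N))
        · rw [add_comm]; exact (hdec'' N).symm
      have hq'tend : Tendsto q' atTop (nhds 0) := by
        have : Tendsto (fun N => ν ξ - ν ξ * s' N) atTop (nhds (ν ξ - ν ξ)) :=
          ENNReal.Tendsto.sub tendsto_const_nhds hs'tend (Or.inl (νne ξ))
        rw [tsub_self] at this
        exact this.congr fun N => (hq'eq N).symm
      -- q N ≤ q' N
      have hqle : ∀ N, q N ≤ q' N := by
        intro N
        refine ENNReal.tsum_le_tsum fun η => ?_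
        by_cases hη : η ∈ F
        · rw [if_pos hη]; exact zero_le
        · rw [if_neg hη, if_neg (by simp; rintro rfl; exact hη hξ)]
          exact mul_le_mul_right (ff_mono P (Set.singleton_subset_iff.2 hξ) N η ξ) _
      -- S∞
      set Sinf : ℝ≥0∞ := ∑' m, S m with hSinf
      have hupper : Sinf ≤ ν ξ := by
        rw [hSinf, ENNReal.tsum_eq_iSup_sum]
        refine iSup_le fun s => ?_
        obtain ⟨n, hn⟩ := s.exists_nat_subset_range
        calc ∑ m ∈ s, S m ≤ ∑ m ∈ Finset.range (n+1), S m :=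
              Finset.sum_le_sum_of_subset (hn.trans (Finset.range_subset_range.2 (by omega)))
          _ ≤ ν ξ := by rw [hdec n]; exact le_self_add
      have hlower : ν ξ ≤ Sinf := by
        have htt : Tendsto (fun N => Sinf + q' N) atTop (nhds Sinf) := by
          have : Tendsto (fun N => Sinf + q' N) atTop (nhds (Sinf + 0)) :=
            Tendsto.const_add _ hq'tend
          rwa [add_zero] at this
        refine ge_of_tendsto' htt fun N => ?_
        calc ν ξ = (∑ m ∈ Finset.range (N+1), S m) + q N := hdec N
          _ ≤ Sinf + q' N := add_le_add (ENNReal.sum_le_tsum _) (hqle N)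
      have hSeq : Sinf = ∑' η, if η ∈ F then ν η * pp F η ξ else 0 := by
        rw [hSinf, ENNReal.tsum_comm]
        refine tsum_congr fun η => ?_
        by_cases hη : η ∈ F
        · simp only [if_pos hη]
          rw [ENNReal.tsum_mul_left]
        · simp [hη]
      rw [← hSeq]
      exact le_antisymm hupper hlower
    -- KEY 2 : ∑_{η ∈ F} pp F ξ η = 1
    have key2 : (∑' η, if η ∈ F then pp F ξ η else 0) = 1 :=
      P_tot ℙ P hprob hM' hξ hrec ξ
    -- T_L and T_R
    set TL : ℝ≥0∞ := ∑' η, if η ∈ F ∧ η ≠ ξ then ν η * pp F η ξ else 0 with hTL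
    set TR : ℝ≥0∞ := ∑' η, if η ∈ F ∧ η ≠ ξ then pp F ξ η else 0 with hTR
    have hTLeq : ν ξ * pp F ξ ξ + TL = ν ξ := by
      have hkey := key1
      rw [ENNReal.tsum_eq_add_tsum_ite ξ, if_pos hξ] at hkey
      have hrest : (∑' η, if η = ξ then 0 else if η ∈ F then ν η * pp F η ξ else 0) = TL := by
        rw [hTL]
        refine tsum_congr fun η => ?_
        by_cases hη : η = ξ
        · simp [hη]
        · by_cases hηF : η ∈ F
          · rw [if_neg hη, if_pos hηF, if_pos ⟨hηF, hη⟩]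
          · rw [if_neg hη, if_neg hηF, if_neg (by tauto)]
      rw [hrest] at hkey
      exact hkey
    have hTReq : pp F ξ ξ + TR = 1 := by
      have hkey := key2
      rw [ENNReal.tsum_eq_add_tsum_ite ξ, if_pos hξ] at hkey
      have hrest : (∑' η, if η = ξ then 0 else if η ∈ F then pp F ξ η else 0) = TR := by
        rw [hTR]
        refine tsum_congr fun η => ?_
        by_cases hη : η = ξ
        · simp [hη]
        · by_cases hηF : η ∈ F
          · rw [if_neg hη, if_pos hηF, if_pos ⟨hηF, hη⟩]
          · rw [if_neg hη, if_neg hηF, if_neg (by tauto)]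
      rw [hrest] at hkey
      exact hkey
    have hcancel : TL = ν ξ * TR := by
      have h2 : ν ξ * pp F ξ ξ + ν ξ * TR = ν ξ := by
        rw [← mul_add, hTReq, mul_one]
      have h3 : ν ξ * pp F ξ ξ + TL = ν ξ * pp F ξ ξ + ν ξ * TR := by
        rw [hTLeq, h2]
      exact WithTop.add_left_cancel
        (ENNReal.mul_ne_top (νne ξ) (pp_ne_top hξ ξ)) h3
    have hTRle : TR ≤ 1 := by
      rw [← hTReq]; exact le_add_self
    have hTRne : TR ≠ ⊤ := ne_top_of_le_ne_top ENNReal.one_ne_top hTRle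
    -- convert to real equalities
    have hterm : ∀ η, (if η ∈ F ∧ η ≠ ξ then h η * μ η * Rh η ξ else 0)
        = ((if η ∈ F ∧ η ≠ ξ then ν η * pp F η ξ else 0) : ℝ≥0∞).toReal := by
      intro η
      by_cases hc : η ∈ F ∧ η ≠ ξ
      · rw [if_pos hc, if_pos hc, hRh η ξ hc.2, P_ret' hξ η, ENNReal.toReal_mul, νtoReal]
        have hhη : h η ≠ 0 := (hpos hc.1).ne'
        field_simp
      · rw [if_neg hc, if_neg hc, ENNReal.toReal_zero]
    have hLHS : (∑' η, if η ∈ F ∧ η ≠ ξ then h η * μ η * Rh η ξ else 0) = TL.toReal := by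
      rw [hTL, ENNReal.tsum_toReal_eq (fun η => by
        by_cases hc : η ∈ F ∧ η ≠ ξ
        · rw [if_pos hc]; exact ENNReal.mul_ne_top (νne η) (pp_ne_top hξ η)
        · rw [if_neg hc]; exact ENNReal.zero_ne_top)]
      exact tsum_congr hterm
    set c : ℝ≥0∞ := ENNReal.ofReal (lam ξ / h ξ) with hc
    have hterm2 : ∀ η, (if η ∈ F ∧ η ≠ ξ then Rh ξ η else 0)
        = ((if η ∈ F ∧ η ≠ ξ then c * pp F ξ η else 0) : ℝ≥0∞).toReal := by
      intro η
      by_cases hcc : η ∈ F ∧ η ≠ ξ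
      · rw [if_pos hcc, if_pos hcc, hRh ξ η (Ne.symm hcc.2), P_ret' hcc.1 ξ,
          ENNReal.toReal_mul, hc, ENNReal.toReal_ofReal
            (by have := (hlampos ξ).le; have := (hpos hξ).le; positivity)]
      · rw [if_neg hcc, if_neg hcc, ENNReal.toReal_zero]
    have hRHS : (∑' η, if η ∈ F ∧ η ≠ ξ then Rh ξ η else 0) = (c * TR).toReal := by
      rw [show c * TR = ∑' η, if η ∈ F ∧ η ≠ ξ then c * pp F ξ η else 0 by
        rw [hTR, ← ENNReal.tsum_mul_left]
        refine tsum_congr fun η => ?_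
        by_cases hcc : η ∈ F ∧ η ≠ ξ
        · rw [if_pos hcc, if_pos hcc]
        · rw [if_neg hcc, if_neg hcc, mul_zero]]
      rw [ENNReal.tsum_toReal_eq (fun η => by
        by_cases hcc : η ∈ F ∧ η ≠ ξ
        · rw [if_pos hcc]
          exact ENNReal.mul_ne_top ENNReal.ofReal_ne_top (pp_ne_top hcc.1 ξ)
        · rw [if_neg hcc]; exact ENNReal.zero_ne_top)]
      exact tsum_congr hterm2
    rw [hLHS, hRHS, hcancel, ENNReal.toReal_mul, ENNReal.toReal_mul, νtoReal,
      hc, ENNReal.toReal_ofReal (by have := (hlampos ξ).le; have := (hpos hξ).le; positivity)]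
    have hhξ : h ξ ≠ 0 := (hpos hξ).ne'
    field_simp
  · -- reversibility
    intro hsym η hη ξ hξ'
    by_cases he : η = ξ
    · subst he; rfl
    · have hdb : ∀ a b, ν a * P a b = ν b * P b a := by
        intro a b
        rw [hνP a b, hνP b a, hsym a b]
      have hppsym : ν η * pp F η ξ = ν ξ * pp F ξ η := by
        rw [hpp]
        dsimp only
        rw [← ENNReal.tsum_mul_left, ← ENNReal.tsum_mul_left]
        exact tsum_congr fun n => ff_symm P ν F hdb n η ξ
      have e1 : h η * μ η * Rh η ξ = (ν η * pp F η ξ).toReal := by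
        rw [hRh η ξ he, P_ret' hξ' η, ENNReal.toReal_mul, νtoReal]
        have hhη : h η ≠ 0 := (hpos hη).ne'
        field_simp
      have e2 : h ξ * μ ξ * Rh ξ η = (ν ξ * pp F ξ η).toReal := by
        rw [hRh ξ η (Ne.symm he), P_ret' hη ξ, ENNReal.toReal_mul, νtoReal]
        have hhξ : h ξ ≠ 0 := (hpos hξ').ne'
        field_simp
      rw [e1, e2, hppsym]
end

section
/- Let F ⊆ E and let R^F denote the transition rates of the trace of an irreducible recurrent Markov chain {η_t} on F. Then for η, ξ ∈ F with η ≠ ξ: R^F(η,ξ) = R(η,ξ) + Σ_{ζ∈F^c} R(η,ζ) P_ζ[T_F = T_ξ], i.e., the trace rate equals the direct rate plus the rates of excursions through F^c that re-enter F at ξ. -/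
open MeasureTheory
open scoped ENNReal
open scoped Classical

section aux
variable {E : Type*} {A : Set E} {ω : ℕ → E}

lemma retT_eq_find (h : ∃ n, 0 < n ∧ ω n ∈ A) : retT A ω = (Nat.find h : ℕ∞) := by
  apply le_antisymm
  · exact iInf_le_of_le (Nat.find h) (iInf_le_of_le (Nat.find_spec h) le_rfl)
  · exact le_iInf₂ fun n hn => Nat.cast_le.mpr (Nat.find_min' h hn)

lemma retT_eq_top (h : ∀ n, 0 < n → ω n ∉ A) : retT A ω = ⊤ := by
  simp only [retT, iInf_eq_top]
  intro n hn
  exact absurd hn.2 (h n hn.1)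

lemma retT_eq_coe_iff {n : ℕ} :
    retT A ω = (n : ℕ∞) ↔ (0 < n ∧ ω n ∈ A) ∧ ∀ m, m < n → ¬(0 < m ∧ ω m ∈ A) := by
  constructor
  · intro h
    by_cases he : ∃ k, 0 < k ∧ ω k ∈ A
    · rw [retT_eq_find he] at h
      have hfind : Nat.find he = n := by exact_mod_cast h
      rw [← hfind]
      exact ⟨Nat.find_spec he, fun m hm => Nat.find_min he hm⟩
    · rw [retT_eq_top (fun k hk hmem => he ⟨k, hk, hmem⟩)] at h
      exact absurd h.symm (by simp)
  · rintro ⟨hspec, hmin⟩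
    have he : ∃ k, 0 < k ∧ ω k ∈ A := ⟨n, hspec⟩
    have : Nat.find he = n := (Nat.find_eq_iff he).mpr ⟨hspec, hmin⟩
    rw [retT_eq_find he, this]

lemma retT_eq_one_iff : retT A ω = 1 ↔ ω 1 ∈ A := by
  rw [show (1 : ℕ∞) = ((1 : ℕ) : ℕ∞) by norm_cast, retT_eq_coe_iff]
  constructor
  · exact fun h => h.1.2
  · intro h
    exact ⟨⟨one_pos, h⟩, fun m hm hc => absurd hc.1 (by omega)⟩

lemma retT_shift (h : ω 1 ∉ A) :
    retT A ω = 1 + retT A (fun n => ω (n + 1)) := by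
  by_cases he : ∃ k, 0 < k ∧ ω k ∈ A
  · have he' : ∃ m, 0 < m ∧ (fun n => ω (n + 1)) m ∈ A := by
      obtain ⟨k, hk, hkA⟩ := he
      have hk1 : k ≠ 1 := by
        intro hc
        exact h (hc ▸ hkA)
      have hk2 : 2 ≤ k := by omega
      exact ⟨k - 1, by omega, by simpa [Nat.sub_add_cancel (by omega : 1 ≤ k)] using hkA⟩
    rw [retT_eq_find he, retT_eq_find he']
    have h2 : 2 ≤ Nat.find he := by
      have h0 : 0 < Nat.find he := (Nat.find_spec he).1
      have h1 : Nat.find he ≠ 1 := by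
        intro hc
        exact h (by simpa [hc] using (Nat.find_spec he).2)
      omega
    have hle1 : Nat.find he ≤ Nat.find he' + 1 :=
      Nat.find_min' he ⟨by omega, (Nat.find_spec he').2⟩
    have hle2 : Nat.find he' ≤ Nat.find he - 1 := by
      apply Nat.find_min' he'
      refine ⟨by omega, ?_⟩
      show ω (Nat.find he - 1 + 1) ∈ A
      rw [Nat.sub_add_cancel (by omega)]
      exact (Nat.find_spec he).2
    have : Nat.find he = Nat.find he' + 1 := by omega
    rw [this]
    push_cast
    ring
  · have h1 : ∀ k, 0 < k → ω k ∉ A := fun k hk hA => he ⟨k, hk, hA⟩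
    have h2 : ∀ m, 0 < m → (fun n => ω (n + 1)) m ∉ A :=
      fun m hm hA => he ⟨m + 1, by omega, hA⟩
    rw [retT_eq_top h1, retT_eq_top h2]
    rfl

end aux

lemma measurableSet_retT_eq {E : Type*} [Countable E] [MeasurableSpace E]
    [MeasurableSingletonClass E] (A : Set E) (k : ℕ∞) :
    MeasurableSet {ω : ℕ → E | retT A ω = k} := by
  have hA : MeasurableSet A := (Set.to_countable A).measurableSet
  induction k using WithTop.recTopCoe with
  | top =>
    have hs : {ω : ℕ → E | retT A ω = ⊤} = ⋂ n : ℕ, (fun ω : ℕ → E => ω (n + 1)) ⁻¹' Aᶜ := by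
      ext ω
      simp only [Set.mem_setOf_eq, Set.mem_iInter, Set.mem_preimage, Set.mem_compl_iff]
      constructor
      · intro h n hmem
        have := retT_eq_find (⟨n + 1, by omega, hmem⟩ : ∃ k, 0 < k ∧ ω k ∈ A)
        rw [h] at this
        exact absurd this.symm (by simp)
      · intro h
        refine retT_eq_top fun n hn => ?_
        cases n with
        | zero => omega
        | succ m => exact h m
    show MeasurableSet {ω : ℕ → E | retT A ω = (⊤ : ℕ∞)}
    rw [hs]
    exact MeasurableSet.iInter fun n => (measurable_pi_apply (n + 1)) hA.compl
  | coe n =>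
    show MeasurableSet {ω : ℕ → E | retT A ω = (n : ℕ∞)}
    rcases Nat.eq_zero_or_pos n with hn | hn
    · subst hn
      have hs : {ω : ℕ → E | retT A ω = ((0 : ℕ) : ℕ∞)} = ∅ := by
        ext ω
        simp only [Set.mem_setOf_eq, Set.mem_empty_iff_false, iff_false]
        intro h
        exact absurd (retT_eq_coe_iff.mp h).1.1 (lt_irrefl 0)
      rw [hs]
      exact MeasurableSet.empty
    · have hs : {ω : ℕ → E | retT A ω = (n : ℕ∞)} =
          ((fun ω : ℕ → E => ω n) ⁻¹' A) ∩
            ⋂ m : ℕ, {ω : ℕ → E | ¬(0 < m ∧ m < n ∧ ω m ∈ A)} := by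
        ext ω
        simp only [Set.mem_setOf_eq, Set.mem_inter_iff, Set.mem_preimage, Set.mem_iInter]
        rw [retT_eq_coe_iff]
        constructor
        · rintro ⟨⟨-, hmem⟩, hmin⟩
          refine ⟨hmem, fun m hc => hmin m hc.2.1 ⟨hc.1, hc.2.2⟩⟩
        · rintro ⟨hmem, hmin⟩
          exact ⟨⟨hn, hmem⟩, fun m hm hc => hmin m ⟨hc.1, hm, hc.2⟩⟩
      rw [hs]
      refine ((measurable_pi_apply n) hA).inter (MeasurableSet.iInter fun m => ?_)
      by_cases hm : 0 < m ∧ m < n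
      · have hs2 : {ω : ℕ → E | ¬(0 < m ∧ m < n ∧ ω m ∈ A)} = (fun ω : ℕ → E => ω m) ⁻¹' Aᶜ := by
          ext ω; simp [hm.1, hm.2]
        rw [hs2]; exact (measurable_pi_apply m) hA.compl
      · have hs2 : {ω : ℕ → E | ¬(0 < m ∧ m < n ∧ ω m ∈ A)} = Set.univ := by
          ext ω
          simp only [Set.mem_univ, iff_true]
          intro hc
          exact hm ⟨hc.1, hc.2.1⟩
        rw [hs2]; exact MeasurableSet.univ

/-- For an irreducible recurrent Markov chain with rates `R`, the rates of the trace
process on `F`, `R^F(η,ξ) = lam(η) P_η[T_F⁺ = T_ξ⁺]`, satisfy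
`R^F(η,ξ) = R(η,ξ) + ∑_{ζ ∈ F^c} R(η,ζ) P_ζ[T_F = T_ξ]`: the trace rate is the direct rate
plus the rates of excursions through `F^c` re-entering `F` at `ξ`.
`ℙ` is the family of laws of the jump chain, with jump probabilities `R(η,ξ)/lam(η)`. -/
theorem stmt9 {E : Type*} [Countable E] [MeasurableSpace E] [MeasurableSingletonClass E]
    (R : E → E → ℝ) (lam : E → ℝ) (ℙ : E → Measure (ℕ → E))
    (F : Set E) (η ξ : E)
    (hηF : η ∈ F) (hξF : ξ ∈ F) (hηξ : η ≠ ξ)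
    (hRdiag : ∀ η, R η η = 0)
    (hR_nonneg : ∀ η ξ, 0 ≤ R η ξ)
    (hRsum : ∀ η, Summable (R η))
    (hlam : ∀ η, lam η = ∑' ζ, R η ζ)
    (hlampos : ∀ η, 0 < lam η)
    (hprob : ∀ η, IsProbabilityMeasure (ℙ η))
    (hstart : ∀ η, ℙ η {ω | ω 0 = η} = 1)
    (hMarkov : ∀ (η ξ : E) (C : Set (ℕ → E)), MeasurableSet C →
      ℙ η {ω | ω 1 = ξ ∧ (fun n => ω (n + 1)) ∈ C}
        = ENNReal.ofReal (R η ξ / lam η) * ℙ ξ C)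
    (hrec : ∀ η ξ, ℙ η {ω | ∃ n, 0 < n ∧ ω n = ξ} = 1) :
    lam η * (ℙ η {ω | retT F ω = retT {ξ} ω}).toReal
      = R η ξ + ∑' ζ, (if ζ ∉ F
          then R η ζ * (ℙ ζ {ω | retT F ω = retT {ξ} ω}).toReal else 0) := by
  set A : Set (ℕ → E) := {ω | retT F ω = retT {ξ} ω} with hA_def
  -- measurability of A
  have hAmeas : MeasurableSet A := by
    have hU : A = ⋃ k : ℕ∞, ({ω : ℕ → E | retT F ω = k} ∩ {ω : ℕ → E | retT {ξ} ω = k}) := by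
      ext ω
      simp only [hA_def, Set.mem_setOf_eq, Set.mem_iUnion, Set.mem_inter_iff]
      constructor
      · exact fun h => ⟨retT {ξ} ω, h, rfl⟩
      · rintro ⟨k, h1, h2⟩
        exact h1.trans h2.symm
    rw [hU]
    exact MeasurableSet.iUnion fun k =>
      (measurableSet_retT_eq F k).inter (measurableSet_retT_eq {ξ} k)
  -- splitting over the first step
  have hsplit : ℙ η A = ∑' ζ : E, ℙ η (A ∩ {ω | ω 1 = ζ}) := by
    have hU : A = ⋃ ζ : E, (A ∩ {ω | ω 1 = ζ}) := by
      ext ω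
      simp only [Set.mem_iUnion, Set.mem_inter_iff, Set.mem_setOf_eq]
      exact ⟨fun h => ⟨ω 1, h, rfl⟩, fun ⟨ζ, h, _⟩ => h⟩
    conv_lhs => rw [hU]
    rw [measure_iUnion]
    · intro ζ ζ' hne
      simp only [Function.onFun, Set.disjoint_left]
      rintro ω ⟨-, h1⟩ ⟨-, h2⟩
      exact hne (h1.symm.trans h2)
    · intro ζ
      have h1 : MeasurableSet ((fun ω : ℕ → E => ω 1) ⁻¹' {ζ}) :=
        (measurable_pi_apply 1) (measurableSet_singleton ζ)
      exact hAmeas.inter h1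
  -- the value of each term
  have hterm : ∀ ζ : E, ℙ η (A ∩ {ω | ω 1 = ζ}) =
      if ζ = ξ then ENNReal.ofReal (R η ξ / lam η)
      else if ζ ∉ F then ENNReal.ofReal (R η ζ / lam η) * ℙ ζ A
      else 0 := by
    intro ζ
    by_cases hζξ : ζ = ξ
    · subst hζξ
      have hset : A ∩ {ω | ω 1 = ζ} = {ω | ω 1 = ζ ∧ (fun n => ω (n + 1)) ∈ Set.univ} := by
      -- note: here ξ has been renamed ζ
        ext ω
        simp only [Set.mem_inter_iff, Set.mem_setOf_eq, Set.mem_univ, and_true, hA_def]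
        constructor
        · exact fun h => h.2
        · intro h1
          refine ⟨?_, h1⟩
          have hF1 : retT F ω = 1 := retT_eq_one_iff.mpr (by rw [h1]; exact hξF)
          have hξ1 : retT {ζ} ω = 1 := retT_eq_one_iff.mpr (by rw [h1]; exact rfl)
          rw [hF1, hξ1]
      rw [hset, hMarkov η ζ Set.univ MeasurableSet.univ]
      haveI := hprob ζ
      simp
    · by_cases hζF : ζ ∈ F
      · have hset : A ∩ {ω | ω 1 = ζ} = ∅ := by
          ext ω
          simp only [Set.mem_inter_iff, Set.mem_setOf_eq, Set.mem_empty_iff_false, iff_false,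
            not_and, hA_def]
          intro hAmem h1
          have hF1 : retT F ω = 1 := retT_eq_one_iff.mpr (by rw [h1]; exact hζF)
          have hξ1 : retT {ξ} ω = 1 := hAmem.symm.trans hF1
          have : ω 1 ∈ ({ξ} : Set E) := retT_eq_one_iff.mp hξ1
          rw [Set.mem_singleton_iff, h1] at this
          exact hζξ this
        rw [hset]
        simp [hζξ, hζF]
      · have hξne : ζ ≠ ξ := hζξ
        have hset : A ∩ {ω | ω 1 = ζ} = {ω | ω 1 = ζ ∧ (fun n => ω (n + 1)) ∈ A} := by
          ext ω
          simp only [Set.mem_inter_iff, Set.mem_setOf_eq, hA_def]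
          have key : ∀ h1 : ω 1 = ζ,
              (retT F ω = retT {ξ} ω ↔
               retT F (fun n => ω (n + 1)) = retT {ξ} (fun n => ω (n + 1))) := by
            intro h1
            have hF1 : ω 1 ∉ F := by rw [h1]; exact hζF
            have hξ1 : ω 1 ∉ ({ξ} : Set E) := by
              rw [h1, Set.mem_singleton_iff]
              intro hc
              exact hζF (hc ▸ hξF)
            rw [retT_shift hF1, retT_shift hξ1]
            exact WithTop.add_left_inj (by exact WithTop.coe_ne_top)
          constructor
          · rintro ⟨h, h1⟩
            exact ⟨h1, (key h1).mp h⟩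
          · rintro ⟨h1, h⟩
            exact ⟨(key h1).mpr h, h1⟩
        rw [hset, hMarkov η ζ A hAmeas]
        simp [hζξ, hζF]
  -- the ENNReal identity
  have hPA : ℙ η A = ENNReal.ofReal (R η ξ / lam η)
      + ∑' ζ : E, (if ζ ∉ F then ENNReal.ofReal (R η ζ / lam η) * ℙ ζ A else 0) := by
    rw [hsplit, tsum_congr hterm, ENNReal.tsum_eq_add_tsum_ite ξ]
    congr 1
    · simp
    · refine tsum_congr fun ζ => ?_
      by_cases hζξ : ζ = ξ
      · subst hζξ
        simp [hξF]
      · simp [hζξ]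
  haveI := hprob η
  -- finiteness facts
  have hPAfin : ∀ ζ : E, ℙ ζ A ≠ ⊤ := fun ζ => (measure_ne_top (ℙ ζ) A)
  have hfin : ∀ ζ : E,
      (if ζ ∉ F then ENNReal.ofReal (R η ζ / lam η) * ℙ ζ A else 0) ≠ ⊤ := by
    intro ζ
    by_cases hζF : ζ ∉ F
    · rw [if_pos hζF]
      exact ENNReal.mul_ne_top ENNReal.ofReal_ne_top (hPAfin ζ)
    · rw [if_neg hζF]
      exact ENNReal.zero_ne_top
  have htsumfin : (∑' ζ : E, (if ζ ∉ F then ENNReal.ofReal (R η ζ / lam η) * ℙ ζ A else 0)) ≠ ⊤ := by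
    intro hc
    have : ℙ η A = ⊤ := by rw [hPA, hc]; simp
    exact (hPAfin η) this
  -- toReal of the identity
  have hPAre : (ℙ η A).toReal = R η ξ / lam η
      + ∑' ζ : E, (if ζ ∉ F then R η ζ / lam η * (ℙ ζ A).toReal else 0) := by
    rw [hPA, ENNReal.toReal_add ENNReal.ofReal_ne_top htsumfin,
      ENNReal.toReal_ofReal (div_nonneg (hR_nonneg η ξ) (hlampos η).le),
      ENNReal.tsum_toReal_eq hfin]
    congr 1
    refine tsum_congr fun ζ => ?_
    by_cases hζF : ζ ∉ F
    · rw [if_pos hζF, if_pos hζF, ENNReal.toReal_mul,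
        ENNReal.toReal_ofReal (div_nonneg (hR_nonneg η ζ) (hlampos η).le)]
    · rw [if_neg hζF, if_neg hζF, ENNReal.toReal_zero]
  rw [hPAre, mul_add, ← tsum_mul_left]
  have hlamne : lam η ≠ 0 := (hlampos η).ne'
  congr 1
  · field_simp
  · refine tsum_congr fun ζ => ?_
    by_cases hζF : ζ ∉ F
    · rw [if_pos hζF, if_pos hζF, ← mul_assoc, mul_div_cancel₀ (R η ζ) hlamne]
    · rw [if_neg hζF, if_neg hζF, mul_zero]
end
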